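/- arXiv:2204.09105 — 5 statements merged into one kernel-verified Lean document; each statement's English description precedes it below -/
import Mathlib

section
/- Let P and Q be probability measures on ℝ^d. Suppose π ∈ Π(P,Q) is a coupling such that π is absolutely continuous with respect to P×Q with density dπ/d(P×Q)(x,y) = exp(f(x) + g(y) − ½‖x−y‖²) for P×Q-almost every (x,y), for some f ∈ L¹(P) and g ∈ L¹(Q). Then π is the unique minimizer of the entropic transportation problem defining S(P,Q); that is, for every π' ∈ Π(P,Q) with π' ≠ π, ∫ ½‖x−y‖² dπ(x,y) + H(π|P×Q) < ∫ ½‖x−y‖² dπ'(x,y) + H(π'|P×Q). -/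
open MeasureTheory ProbabilityTheory Filter
open scoped ENNReal NNReal Topology

noncomputable section

/-- Euclidean space `ℝ^d`. -/
abbrev Euc (d : ℕ) := EuclideanSpace ℝ (Fin d)

/-- `π` is a coupling of `P` and `Q`. -/
def IsCoupling {d : ℕ} (P Q : Measure (Euc d)) (π : Measure (Euc d × Euc d)) : Prop :=
  π.map Prod.fst = P ∧ π.map Prod.snd = Q

open Classical in
/-- Relative entropy `H(α | β)`: `∫ log (dα/dβ) dα` when `α ≪ β` (and the log-density is
`α`-integrable), and `∞` otherwise. -/
def relEnt {E : Type*} [MeasurableSpace E] (α β : Measure E) : ℝ≥0∞ :=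
  if α ≪ β ∧ Integrable (fun x => Real.log (α.rnDeriv β x).toReal) α
  then ENNReal.ofReal (∫ x, Real.log (α.rnDeriv β x).toReal ∂α) else ∞

/-- Entropic transportation cost
`S_ε(P,Q) = inf_{π ∈ Π(P,Q)} ∫ ½‖x−y‖² dπ + ε H(π | P×Q)`. -/
def entCost {d : ℕ} (ε : ℝ) (P Q : Measure (Euc d)) : ℝ≥0∞ :=
  ⨅ (π : Measure (Euc d × Euc d)) (_ : IsCoupling P Q π),
    (∫⁻ p, ENNReal.ofReal ((1/2) * ‖p.1 - p.2‖^2) ∂π) + ENNReal.ofReal ε * relEnt π (P.prod Q)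

/-- `P` is `σ2`-subgaussian: `∫ exp(‖x‖²/(2 d σ2)) dP ≤ 2`. -/
def IsSubG (d : ℕ) (σ2 : ℝ) (P : Measure (Euc d)) : Prop :=
  ∫⁻ x, ENNReal.ofReal (Real.exp (‖x‖^2 / (2 * d * σ2))) ∂P ≤ 2

/-- Empirical measure `P_n = (1/n) ∑_{i<n} δ_{X i ω}`. -/
def empMeas {Ωs : Type*} [MeasurableSpace Ωs] {d : ℕ} (X : ℕ → Ωs → Euc d) (n : ℕ) (ω : Ωs) :
    Measure (Euc d) :=
  (n : ℝ≥0∞)⁻¹ • ∑ i ∈ Finset.range n, Measure.dirac (X i ω)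

/-- `(f, g)` is a pair of optimal entropic potentials for `(P,Q)` at regularization `ε`. -/
def IsPotPair {d : ℕ} (ε : ℝ) (P Q : Measure (Euc d)) (f g : Euc d → ℝ) : Prop :=
  Integrable f P ∧ Integrable g Q ∧
  (∀ x, ∫ y, Real.exp ((f x + g y - (1/2) * ‖x - y‖^2) / ε) ∂Q = 1) ∧
  (∀ y, ∫ x, Real.exp ((f x + g y - (1/2) * ‖x - y‖^2) / ε) ∂P = 1)

/-- Directional derivative in direction `v`. -/
def dirD {F : Type*} [NormedAddCommGroup F] [NormedSpace ℝ F] (v : F) (f : F → ℝ) : F → ℝ :=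
  fun x => fderiv ℝ f x v

/-- Multi-index partial derivative `D^α f` on `ℝ^d`. -/
def mderiv {d : ℕ} (α : Fin d → ℕ) (f : Euc d → ℝ) : Euc d → ℝ :=
  (List.finRange d).foldr (fun i g => (dirD (EuclideanSpace.single i (1:ℝ)))^[α i] g) f

/-- The (finite) set of multi-indices on `ℝ^d` of order `i`. -/
def mIdx (d i : ℕ) : Finset (Fin d → ℕ) :=
  (Fintype.piFinset fun _ : Fin d => Finset.range (i+1)).filter fun α => (∑ j, α j) = i

/-- Sup of `|f|` over a set `A`. -/
def supOn {X : Type*} (A : Set X) (f : X → ℝ) : ℝ := sSup ((fun x => |f x|) '' A)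

/-- `C^s(A)` norm: `∑_{i=0}^s ∑_{|α| = i} ‖D^α f‖_{∞,A}`. -/
def CsNorm {d : ℕ} (s : ℕ) (A : Set (Euc d)) (f : Euc d → ℝ) : ℝ :=
  ∑ i ∈ Finset.range (s+1), ∑ α ∈ mIdx d i, supOn A (mderiv α f)

/-- Dual norm `‖ν − μ‖_{C^s_1(A)} = sup {∫ f dν − ∫ f dμ : ‖f‖_{C^s(A)} ≤ 1}`. -/
def dualNorm {d : ℕ} (s : ℕ) (A : Set (Euc d)) (μ ν : Measure (Euc d)) : ℝ :=
  sSup {r | ∃ f : Euc d → ℝ, CsNorm s A f ≤ 1 ∧ r = (∫ x, f x ∂ν) - ∫ x, f x ∂μ}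

/-- Multi-index partial derivative `D^{(α,β)} h` on `ℝ^d × ℝ^d` (α in the first variable,
β in the second). -/
def mderiv2 {d : ℕ} (α β : Fin d → ℕ) (f : Euc d × Euc d → ℝ) : Euc d × Euc d → ℝ :=
  (List.finRange d).foldr
    (fun i g => (dirD ((EuclideanSpace.single i (1:ℝ) : Euc d), (0 : Euc d)))^[α i] g)
    ((List.finRange d).foldr
      (fun i g => (dirD ((0 : Euc d), (EuclideanSpace.single i (1:ℝ) : Euc d)))^[β i] g) f)

/-- Pairs of multi-indices on `ℝ^d × ℝ^d` of total order `i`. -/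
def mIdx2 (d i : ℕ) : Finset ((Fin d → ℕ) × (Fin d → ℕ)) :=
  ((Fintype.piFinset fun _ : Fin d => Finset.range (i+1)) ×ˢ
    (Fintype.piFinset fun _ : Fin d => Finset.range (i+1))).filter
      fun p => (∑ j, p.1 j) + (∑ j, p.2 j) = i

/-- `C^s(A)` norm for functions on `ℝ^d × ℝ^d`. -/
def CsNorm2 {d : ℕ} (s : ℕ) (A : Set (Euc d × Euc d)) (f : Euc d × Euc d → ℝ) : ℝ :=
  ∑ i ∈ Finset.range (s+1), ∑ p ∈ mIdx2 d i, supOn A (mderiv2 p.1 p.2 f)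

/-- Weighted norm `‖f‖_s = sup |f|/(1+‖x‖³) + ∑_{i=1}^s ∑_{|α|=i} sup |D^α f|/(1+‖x‖^{s+1})`. -/
def wNorm {d : ℕ} (s : ℕ) (f : Euc d → ℝ) : ℝ :=
  sSup (Set.range fun x : Euc d => |f x| / (1 + ‖x‖^3)) +
    ∑ i ∈ Finset.range s, ∑ α ∈ mIdx d (i+1),
      sSup (Set.range fun x : Euc d => |mderiv α f x| / (1 + ‖x‖^(s+1)))

/-- The dual functional `L(a,b) = ∫ a dP + ∫ b dQ − ∫∫ e^{a(x)+b(y)−½‖x−y‖²} dP dQ + 1`. -/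
def dualL {d : ℕ} (P Q : Measure (Euc d)) (a b : Euc d → ℝ) : ℝ :=
  (∫ x, a x ∂P) + (∫ y, b y ∂Q) -
    (∫ p : Euc d × Euc d, Real.exp (a p.1 + b p.2 - (1/2) * ‖p.1 - p.2‖^2) ∂(P.prod Q)) + 1

/-- Sinkhorn divergence `D_ε(P,Q) = S_ε(P,Q) − ½ (S_ε(P,P) + S_ε(Q,Q))`. -/
def sinkhorn {d : ℕ} (ε : ℝ) (P Q : Measure (Euc d)) : ℝ :=
  (entCost ε P Q).toReal - (1/2) * ((entCost ε P P).toReal + (entCost ε Q Q).toReal)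

/-- The class `𝒢^s(C)`. -/
def memG (d s : ℕ) (C : ℝ) (f : Euc d → ℝ) : Prop :=
  ContDiff ℝ (s : ℕ∞) f ∧ (∀ x, |f x| ≤ C * (1 + ‖x‖^3)) ∧
  ∀ α : Fin d → ℕ, 1 ≤ (∑ j, α j) → (∑ j, α j) ≤ s →
    ∀ x, |mderiv α f x| ≤ C * (1 + ‖x‖^(s+1))

section AuxEntropic

open MeasureTheory Filter
open scoped ENNReal Topology

variable {α : Type*} [MeasurableSpace α] {μ ν : Measure α}

private lemma key_bound_aux : ∀ t : ℝ, 0 ≤ t → |t * min (Real.log t) 0| ≤ 1 := by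
  intro t ht
  rcases ht.eq_or_lt with h | h
  · simp [← h]
  rcases le_or_gt 0 (Real.log t) with hl | hl
  · simp [min_eq_right hl]
  · rw [min_eq_left hl.le, abs_mul, abs_of_pos h, abs_of_neg hl]
    have h1 : Real.log t⁻¹ ≤ t⁻¹ - 1 := Real.log_le_sub_one_of_pos (inv_pos.2 h)
    rw [Real.log_inv] at h1
    have h2 : t * (-Real.log t) ≤ t * (t⁻¹ - 1) := mul_le_mul_of_nonneg_left h1 h.le
    have h3 : t * t⁻¹ = 1 := mul_inv_cancel₀ h.ne'
    nlinarith

private lemma integrable_min_llr_aux (hμν : μ ≪ ν) [IsFiniteMeasure μ] [IsFiniteMeasure ν] :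
    Integrable (fun x => min (llr μ ν x) 0) μ := by
  rw [← integrable_rnDeriv_smul_iff hμν]
  have hmeas : AEStronglyMeasurable
      (fun x => (μ.rnDeriv ν x).toReal • min (llr μ ν x) 0) ν :=
    ((Measure.measurable_rnDeriv μ ν).ennreal_toReal.mul
      ((measurable_llr μ ν).min measurable_const)).aestronglyMeasurable
  refine Integrable.mono' (integrable_const 1) hmeas (ae_of_all _ fun x => ?_)
  have := key_bound_aux (μ.rnDeriv ν x).toReal ENNReal.toReal_nonneg
  rw [abs_mul, abs_of_nonneg (ENNReal.toReal_nonneg)] at this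
  simpa [llr] using this

private lemma gibbs_aux (hμν : μ ≪ ν) [IsProbabilityMeasure μ] [IsProbabilityMeasure ν]
    (hint : Integrable (llr μ ν) μ) :
    0 ≤ ∫ x, llr μ ν x ∂μ ∧ (μ ≠ ν → 0 < ∫ x, llr μ ν x ∂μ) := by
  have hu_nonneg : ∀ x, 0 ≤ (μ.rnDeriv ν x).toReal * llr μ ν x
      - (μ.rnDeriv ν x).toReal + 1 := by
    intro x
    rcases (ENNReal.toReal_nonneg : (0:ℝ) ≤ (μ.rnDeriv ν x).toReal).eq_or_lt with h | h
    · rw [← h]; simp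
    · have h1 : Real.log ((μ.rnDeriv ν x).toReal)⁻¹ ≤ ((μ.rnDeriv ν x).toReal)⁻¹ - 1 :=
        Real.log_le_sub_one_of_pos (inv_pos.2 h)
      rw [Real.log_inv] at h1
      have h2 := mul_le_mul_of_nonneg_left h1 h.le
      have h3 : (μ.rnDeriv ν x).toReal * ((μ.rnDeriv ν x).toReal)⁻¹ = 1 :=
        mul_inv_cancel₀ h.ne'
      simp only [llr]
      nlinarith
  have hρint : Integrable (fun x => (μ.rnDeriv ν x).toReal) ν :=
    Measure.integrable_toReal_rnDeriv
  have h1 : Integrable (fun x => (μ.rnDeriv ν x).toReal * llr μ ν x) ν := by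
    have := (integrable_rnDeriv_smul_iff hμν (f := llr μ ν)).mpr hint
    simpa [smul_eq_mul] using this
  have hint_u : Integrable
      (fun x => (μ.rnDeriv ν x).toReal * llr μ ν x - (μ.rnDeriv ν x).toReal + 1) ν :=
    (h1.sub hρint).add (integrable_const 1)
  have hmul : ∫ x, (μ.rnDeriv ν x).toReal * llr μ ν x ∂ν = ∫ x, llr μ ν x ∂μ := by
    have := integral_rnDeriv_smul hμν (f := llr μ ν)
    simpa [smul_eq_mul] using this
  have hmean : ∫ x, ((μ.rnDeriv ν x).toReal * llr μ ν x - (μ.rnDeriv ν x).toReal + 1) ∂ν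
      = ∫ x, llr μ ν x ∂μ := by
    have hD : Integrable
        (fun x => (μ.rnDeriv ν x).toReal * llr μ ν x - (μ.rnDeriv ν x).toReal) ν :=
      h1.sub hρint
    simp only [integral_add hD (integrable_const (1:ℝ)),
      integral_sub h1 hρint, Measure.integral_toReal_rnDeriv hμν, hmul]
    simp
  have hnn : 0 ≤ ∫ x, llr μ ν x ∂μ := by
    rw [← hmean]; exact integral_nonneg hu_nonneg
  refine ⟨hnn, fun hne => ?_⟩
  rcases hnn.eq_or_lt with h0 | h0
  · exfalso
    have hu0 : (fun x => (μ.rnDeriv ν x).toReal * llr μ ν x - (μ.rnDeriv ν x).toReal + 1)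
        =ᵐ[ν] 0 := by
      have hz : ∫ x, ((μ.rnDeriv ν x).toReal * llr μ ν x - (μ.rnDeriv ν x).toReal + 1) ∂ν
          = 0 := by rw [hmean, ← h0]
      exact (integral_eq_zero_iff_of_nonneg_ae (ae_of_all _ hu_nonneg) hint_u).mp hz
    have hρ1 : ∀ᵐ x ∂ν, (μ.rnDeriv ν x).toReal = 1 := by
      filter_upwards [hu0] with x hx
      simp only [Pi.zero_apply, llr] at hx
      by_contra hne1
      rcases (ENNReal.toReal_nonneg : (0:ℝ) ≤ (μ.rnDeriv ν x).toReal).eq_or_lt with h | h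
      · rw [← h] at hx; simp at hx
      · have h1 : Real.log ((μ.rnDeriv ν x).toReal)⁻¹ < ((μ.rnDeriv ν x).toReal)⁻¹ - 1 :=
          Real.log_lt_sub_one_of_pos (inv_pos.2 h) (by simpa [inv_eq_one] using hne1)
        rw [Real.log_inv] at h1
        have h2 := (mul_lt_mul_iff_right₀ h).mpr h1
        have h3 : (μ.rnDeriv ν x).toReal * ((μ.rnDeriv ν x).toReal)⁻¹ = 1 :=
          mul_inv_cancel₀ h.ne'
        nlinarith
    have hrn1 : μ.rnDeriv ν =ᵐ[ν] 1 := by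
      filter_upwards [hρ1, Measure.rnDeriv_ne_top μ ν] with x h1x h2x
      rw [Pi.one_apply, ← ENNReal.toReal_eq_one_iff]
      exact h1x
    exact hne (by rw [← Measure.withDensity_rnDeriv_eq μ ν hμν,
      withDensity_congr_ae hrn1, withDensity_one])
  · exact h0

private lemma isProb_coupling_aux {d : ℕ} {P Q : Measure (Euc d)} [IsProbabilityMeasure P]
    {π : Measure (Euc d × Euc d)} (h : IsCoupling P Q π) : IsProbabilityMeasure π := by
  constructor
  have h1 : π.map Prod.fst Set.univ = 1 := by rw [h.1]; exact measure_univ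
  rwa [Measure.map_apply measurable_fst MeasurableSet.univ, Set.preimage_univ] at h1

private lemma int_fst_aux {d : ℕ} {P Q : Measure (Euc d)} {π : Measure (Euc d × Euc d)}
    (h : IsCoupling P Q π) {f : Euc d → ℝ} (hf : Integrable f P) :
    Integrable (fun p : Euc d × Euc d => f p.1) π := by
  have h1 : Integrable f (π.map Prod.fst) := by rw [h.1]; exact hf
  exact (integrable_map_measure (by rw [h.1]; exact hf.aestronglyMeasurable)
    measurable_fst.aemeasurable).mp h1

private lemma int_snd_aux {d : ℕ} {P Q : Measure (Euc d)} {π : Measure (Euc d × Euc d)}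
    (h : IsCoupling P Q π) {g : Euc d → ℝ} (hg : Integrable g Q) :
    Integrable (fun p : Euc d × Euc d => g p.2) π := by
  have h1 : Integrable g (π.map Prod.snd) := by rw [h.2]; exact hg
  exact (integrable_map_measure (by rw [h.2]; exact hg.aestronglyMeasurable)
    measurable_snd.aemeasurable).mp h1

private lemma integral_fst_aux {d : ℕ} {P Q : Measure (Euc d)} {π : Measure (Euc d × Euc d)}
    (h : IsCoupling P Q π) {f : Euc d → ℝ} (hf : Integrable f P) :
    ∫ p, f p.1 ∂π = ∫ x, f x ∂P := by
  rw [← h.1]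
  exact (integral_map measurable_fst.aemeasurable
    (by rw [h.1]; exact hf.aestronglyMeasurable)).symm

private lemma integral_snd_aux {d : ℕ} {P Q : Measure (Euc d)} {π : Measure (Euc d × Euc d)}
    (h : IsCoupling P Q π) {g : Euc d → ℝ} (hg : Integrable g Q) :
    ∫ p, g p.2 ∂π = ∫ y, g y ∂Q := by
  rw [← h.2]
  exact (integral_map measurable_snd.aemeasurable
    (by rw [h.2]; exact hg.aestronglyMeasurable)).symm

end AuxEntropic

/-- if a coupling `π` of `P` and `Q` has density
`dπ/d(P×Q)(x,y) = e^{f(x)+g(y)−½‖x−y‖²}` a.e. for some `f ∈ L¹(P)`, `g ∈ L¹(Q)`, then `π` is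
the unique minimizer of the entropic transportation problem defining `S(P,Q)`. -/
theorem entropic_unique_minimizer {d : ℕ} (P Q : Measure (Euc d))
    [IsProbabilityMeasure P] [IsProbabilityMeasure Q]
    (π : Measure (Euc d × Euc d)) (hπ : IsCoupling P Q π)
    (f g : Euc d → ℝ) (hf : Integrable f P) (hg : Integrable g Q)
    (hac : π ≪ P.prod Q)
    (hdens : (fun p => (π.rnDeriv (P.prod Q) p).toReal)
      =ᵐ[P.prod Q] fun p : Euc d × Euc d => Real.exp (f p.1 + g p.2 - (1/2) * ‖p.1 - p.2‖^2)) :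
    ∀ π' : Measure (Euc d × Euc d), IsCoupling P Q π' → π' ≠ π →
      (∫⁻ p, ENNReal.ofReal ((1/2) * ‖p.1 - p.2‖^2) ∂π) + relEnt π (P.prod Q) <
        (∫⁻ p, ENNReal.ofReal ((1/2) * ‖p.1 - p.2‖^2) ∂π') + relEnt π' (P.prod Q) := by
  intro π' hπ' hne
  haveI hPM1 : IsProbabilityMeasure π := isProb_coupling_aux hπ
  haveI hPM2 : IsProbabilityMeasure π' := isProb_coupling_aux hπ'
  haveI hSF1 : SigmaFinite π := inferInstance
  haveI hSF2 : SigmaFinite π' := inferInstance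
  haveI hSF3 : SigmaFinite (P.prod Q) := inferInstance
  set c : Euc d × Euc d → ℝ := fun p => (1/2) * ‖p.1 - p.2‖^2 with hc
  have hcnn : ∀ p, 0 ≤ c p := by intro p; rw [hc]; positivity
  have hcmeas : Measurable c := by
    rw [hc]
    exact (continuous_const.mul
      ((continuous_fst.sub continuous_snd).norm.pow 2)).measurable
  have hFπ : Integrable (fun p : Euc d × Euc d => f p.1) π := int_fst_aux hπ hf
  have hGπ : Integrable (fun p : Euc d × Euc d => g p.2) π := int_snd_aux hπ hg
  have hFπ' : Integrable (fun p : Euc d × Euc d => f p.1) π' := int_fst_aux hπ' hf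
  have hGπ' : Integrable (fun p : Euc d × Euc d => g p.2) π' := int_snd_aux hπ' hg
  have hFGπ : Integrable (fun p : Euc d × Euc d => f p.1 + g p.2) π := hFπ.add hGπ
  have hFGπ' : Integrable (fun p : Euc d × Euc d => f p.1 + g p.2) π' := hFπ'.add hGπ'
  -- log-density of π
  have hllrπ : llr π (P.prod Q) =ᵐ[π] fun p => f p.1 + g p.2 - c p := by
    filter_upwards [hac.ae_le hdens] with p hp
    show Real.log (π.rnDeriv (P.prod Q) p).toReal = _
    rw [hp, Real.log_exp]
  -- llr π (P×Q) is integrable w.r.t. π, hence c is integrable w.r.t. π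
  have hmin : Integrable (fun p => min (llr π (P.prod Q) p) 0) π := integrable_min_llr_aux hac
  have hllrint : Integrable (llr π (P.prod Q)) π := by
    have hbound : Integrable
        (fun p => |f p.1 + g p.2| + |min (llr π (P.prod Q) p) 0|) π :=
      hFGπ.abs.add hmin.abs
    refine Integrable.mono' hbound
      (stronglyMeasurable_llr _ _).aestronglyMeasurable ?_
    filter_upwards [hllrπ] with p hp
    rw [Real.norm_eq_abs, abs_le]
    constructor
    · have h1 : min (llr π (P.prod Q) p) 0 ≤ llr π (P.prod Q) p := min_le_left _ _
      have h2 : -|min (llr π (P.prod Q) p) 0| ≤ min (llr π (P.prod Q) p) 0 := neg_abs_le _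
      have h3 : (0:ℝ) ≤ |f p.1 + g p.2| := abs_nonneg _
      linarith
    · have h1 : llr π (P.prod Q) p ≤ f p.1 + g p.2 := by
        rw [hp]; linarith [hcnn p]
      have h2 : f p.1 + g p.2 ≤ |f p.1 + g p.2| := le_abs_self _
      have h3 : (0:ℝ) ≤ |min (llr π (P.prod Q) p) 0| := abs_nonneg _
      linarith
  have hcπ : Integrable c π := by
    have h1 : Integrable (fun p => (f p.1 + g p.2) - llr π (P.prod Q) p) π :=
      hFGπ.sub hllrint
    refine h1.congr ?_
    filter_upwards [hllrπ] with p hp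
    rw [hp]; ring
  -- integral identities for π
  have hintFG : ∫ p, (f p.1 + g p.2) ∂π = ∫ x, f x ∂P + ∫ y, g y ∂Q := by
    rw [integral_add hFπ hGπ, integral_fst_aux hπ hf, integral_snd_aux hπ hg]
  have hintFG' : ∫ p, (f p.1 + g p.2) ∂π' = ∫ x, f x ∂P + ∫ y, g y ∂Q := by
    rw [integral_add hFπ' hGπ', integral_fst_aux hπ' hf, integral_snd_aux hπ' hg]
  set I1 : ℝ := ∫ x, f x ∂P + ∫ y, g y ∂Q with hI1
  have hllr_val : ∫ p, llr π (P.prod Q) p ∂π = I1 - ∫ p, c p ∂π := by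
    rw [integral_congr_ae hllrπ, integral_sub hFGπ hcπ, hintFG]
  have hGibbsπ := gibbs_aux hac hllrint
  have hI1c : 0 ≤ I1 - ∫ p, c p ∂π := by rw [← hllr_val]; exact hGibbsπ.1
  have hcπnn : 0 ≤ ∫ p, c p ∂π := integral_nonneg hcnn
  have hI1nn : 0 ≤ I1 := by linarith
  -- value of the left-hand side
  have hrelπ : relEnt π (P.prod Q) = ENNReal.ofReal (I1 - ∫ p, c p ∂π) := by
    rw [relEnt, if_pos ⟨hac, hllrint⟩, ← llr_def, hllr_val]
  have hlintπ : ∫⁻ p, ENNReal.ofReal (c p) ∂π = ENNReal.ofReal (∫ p, c p ∂π) :=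
    (ofReal_integral_eq_lintegral_ofReal hcπ (ae_of_all _ hcnn)).symm
  have hLHS : (∫⁻ p, ENNReal.ofReal (c p) ∂π) + relEnt π (P.prod Q)
      = ENNReal.ofReal I1 := by
    rw [hlintπ, hrelπ, ← ENNReal.ofReal_add hcπnn hI1c]
    congr 1; ring
  rw [hLHS]
  -- case analysis on the right-hand side
  by_cases hcond : π' ≪ P.prod Q ∧
      Integrable (fun x => Real.log (π'.rnDeriv (P.prod Q) x).toReal) π'
  swap
  · rw [relEnt, if_neg hcond, add_top]
    exact ENNReal.ofReal_lt_top
  obtain ⟨hac', hint'⟩ := hcond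
  have hint'' : Integrable (llr π' (P.prod Q)) π' := hint'
  by_cases hfin : ∫⁻ p, ENNReal.ofReal (c p) ∂π' = ⊤
  · rw [hfin, top_add]
    exact ENNReal.ofReal_lt_top
  have hc'int : Integrable c π' :=
    ⟨hcmeas.aestronglyMeasurable,
      (hasFiniteIntegral_iff_ofReal (ae_of_all _ hcnn)).mpr (lt_top_iff_ne_top.mpr hfin)⟩
  -- P×Q ≪ π since the density of π is a.e. positive
  have hne0 : ∀ᵐ p ∂(P.prod Q), π.rnDeriv (P.prod Q) p ≠ 0 := by
    filter_upwards [hdens] with p hp h0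
    rw [h0] at hp
    simp only [ENNReal.toReal_zero] at hp
    exact (Real.exp_pos _).ne' hp.symm
  have hPQπ : P.prod Q ≪ π := by
    have h1 := withDensity_absolutelyContinuous'
      (Measure.measurable_rnDeriv π (P.prod Q)).aemeasurable hne0
    rwa [Measure.withDensity_rnDeriv_eq π (P.prod Q) hac] at h1
  have hπ'π : π' ≪ π := hac'.trans hPQπ
  -- chain rule for llr
  have hllrπ'PQ : llr π (P.prod Q) =ᵐ[π'] fun p => f p.1 + g p.2 - c p := by
    filter_upwards [hac'.ae_le hdens] with p hp
    show Real.log (π.rnDeriv (P.prod Q) p).toReal = _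
    rw [hp, Real.log_exp]
  have hsum : llr π' (P.prod Q) =ᵐ[π'] fun p => llr π' π p + llr π (P.prod Q) p := by
    have hmul := Measure.rnDeriv_mul_rnDeriv (κ := P.prod Q) hπ'π
    filter_upwards [hac'.ae_le hmul, Measure.rnDeriv_pos hπ'π,
      hπ'π.ae_le (Measure.rnDeriv_lt_top π' π), hac'.ae_le hdens,
      hac'.ae_le (Measure.rnDeriv_lt_top π (P.prod Q))] with p h1 h2 h3 h4 h5
    have ha : (π'.rnDeriv π p).toReal ≠ 0 := (ENNReal.toReal_pos h2.ne' h3.ne).ne'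
    have hb : (π.rnDeriv (P.prod Q) p).toReal ≠ 0 := by
      rw [h4]; exact (Real.exp_pos _).ne'
    show Real.log (π'.rnDeriv (P.prod Q) p).toReal = _
    rw [← h1]
    show Real.log ((π'.rnDeriv π p) * (π.rnDeriv (P.prod Q) p)).toReal = _
    rw [ENNReal.toReal_mul, Real.log_mul ha hb]
    rfl
  have hllrPQ'int : Integrable (fun p => llr π (P.prod Q) p) π' := by
    have h1 : Integrable (fun p => (f p.1 + g p.2) - c p) π' := hFGπ'.sub hc'int
    exact h1.congr hllrπ'PQ.symm
  have hllr'int : Integrable (llr π' π) π' := by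
    have h1 : Integrable
        (fun p => llr π' (P.prod Q) p - llr π (P.prod Q) p) π' :=
      hint''.sub hllrPQ'int
    refine h1.congr ?_
    filter_upwards [hsum] with p hp
    rw [hp]; ring
  -- Gibbs inequalities
  have hG1 := (gibbs_aux hac' hint'').1
  have hG2 : 0 < ∫ p, llr π' π p ∂π' := (gibbs_aux hπ'π hllr'int).2 hne
  set K : ℝ := ∫ p, llr π' π p ∂π' with hK
  -- value of the entropy of π'
  have hval' : ∫ p, llr π' (P.prod Q) p ∂π' = K + (I1 - ∫ p, c p ∂π') := by
    rw [integral_congr_ae hsum, integral_add hllr'int hllrPQ'int,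
      integral_congr_ae hllrπ'PQ, integral_sub hFGπ' hc'int, hintFG']
  have hc'nn : 0 ≤ ∫ p, c p ∂π' := integral_nonneg hcnn
  have hrel' : relEnt π' (P.prod Q) = ENNReal.ofReal (K + (I1 - ∫ p, c p ∂π')) := by
    rw [relEnt, if_pos ⟨hac', hint'⟩, ← llr_def, hval']
  have hlintπ' : ∫⁻ p, ENNReal.ofReal (c p) ∂π' = ENNReal.ofReal (∫ p, c p ∂π') :=
    (ofReal_integral_eq_lintegral_ofReal hc'int (ae_of_all _ hcnn)).symm
  have hRHS : (∫⁻ p, ENNReal.ofReal (c p) ∂π') + relEnt π' (P.prod Q)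
      = ENNReal.ofReal (I1 + K) := by
    rw [hlintπ', hrel', ← ENNReal.ofReal_add hc'nn (by rw [← hval']; exact hG1)]
    congr 1; ring
  rw [hRHS]
  exact (ENNReal.ofReal_lt_ofReal_iff (by linarith)).mpr (by linarith)
end
end

section
/- Let Ω ⊂ ℝ^d be compact with diameter D_Ω, let P and Q be probability measures supported in Ω, and let (f*, g*) be a pair of optimal entropic potentials for (P,Q). Then: (i) for every x ∈ Ω, min_{y∈Ω} {½‖x−y‖² − g*(y)} ≤ f*(x) ≤ max_{y∈Ω} {½‖x−y‖² − g*(y)}; and (ii) f* is D_Ω-Lipschitz on Ω. -/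
open MeasureTheory ProbabilityTheory Filter
open scoped ENNReal NNReal Topology

noncomputable section

/-- for compactly supported `P, Q` and optimal entropic potentials `(f*,g*)`,
`min_{y∈Ω} {½‖x−y‖² − g*(y)} ≤ f*(x) ≤ max_{y∈Ω} {½‖x−y‖² − g*(y)}` on `Ω`, and `f*` is
`D_Ω`-Lipschitz on `Ω`. -/
theorem potential_sandwich_and_lipschitz {d : ℕ} (Ω : Set (Euc d)) (hΩ : IsCompact Ω)
    (P Q : Measure (Euc d)) [IsProbabilityMeasure P] [IsProbabilityMeasure Q]
    (hP : P Ωᶜ = 0) (hQ : Q Ωᶜ = 0)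
    (f g : Euc d → ℝ) (hpot : IsPotPair 1 P Q f g) :
    (∀ x ∈ Ω,
      sInf ((fun y => (1/2) * ‖x - y‖^2 - g y) '' Ω) ≤ f x ∧
      f x ≤ sSup ((fun y => (1/2) * ‖x - y‖^2 - g y) '' Ω)) ∧
    (∀ x ∈ Ω, ∀ x' ∈ Ω, |f x - f x'| ≤ Metric.diam Ω * ‖x - x'‖) := by
  obtain ⟨hf, hg, h1, h2⟩ := hpot
  simp only [div_one] at h1 h2
  set D := Metric.diam Ω with hDdef
  have hD0 : 0 ≤ D := Metric.diam_nonneg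
  have hΩne : Ω.Nonempty := by
    by_contra h
    rw [Set.not_nonempty_iff_eq_empty] at h
    rw [h, Set.compl_empty] at hQ
    simp [measure_univ] at hQ
  have hQae : ∀ᵐ y ∂Q, y ∈ Ω := by
    rw [MeasureTheory.ae_iff]
    exact hQ
  have hintQ : ∀ x, Integrable (fun y => Real.exp (f x + g y - (1/2) * ‖x - y‖^2)) Q := by
    intro x
    by_contra h
    have h' := h1 x
    rw [integral_undef h] at h'
    norm_num at h'
  -- bound on differences of squared norms
  have key3 : ∀ a ∈ Ω, ∀ b ∈ Ω, ∀ c ∈ Ω,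
      (1/2) * ‖a - b‖^2 - (1/2) * ‖a - c‖^2 ≤ D * ‖b - c‖ := by
    intro a ha b hb c hc
    have hab : ‖a - b‖ ≤ D := by
      rw [← dist_eq_norm]; exact Metric.dist_le_diam_of_mem hΩ.isBounded ha hb
    have hac : ‖a - c‖ ≤ D := by
      rw [← dist_eq_norm]; exact Metric.dist_le_diam_of_mem hΩ.isBounded ha hc
    have htri : ‖a - b‖ ≤ ‖a - c‖ + ‖c - b‖ := norm_sub_le_norm_sub_add_norm_sub a c b
    have hrev : ‖c - b‖ = ‖b - c‖ := norm_sub_rev c b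
    have h1' : ‖a - b‖ - ‖a - c‖ ≤ ‖b - c‖ := by rw [← hrev]; linarith
    have hbn : 0 ≤ ‖a - b‖ := norm_nonneg _
    have hcn : 0 ≤ ‖a - c‖ := norm_nonneg _
    have hbc : 0 ≤ ‖b - c‖ := norm_nonneg _
    nlinarith [mul_nonneg hbc (sub_nonneg.mpr hac)]
  -- one-sided Lipschitz bound for f on Ω
  have hlip : ∀ x ∈ Ω, ∀ x' ∈ Ω, f x - f x' ≤ D * ‖x - x'‖ := by
    intro x hx x' hx'
    have hle : (fun y => Real.exp (f x' + g y - (1/2) * ‖x' - y‖^2)) ≤ᵐ[Q]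
        fun y => Real.exp (f x' - f x + D * ‖x - x'‖) *
          Real.exp (f x + g y - (1/2) * ‖x - y‖^2) := by
      filter_upwards [hQae] with y hy
      rw [← Real.exp_add]
      apply Real.exp_le_exp.mpr
      have h3 : (1/2) * ‖y - x‖^2 - (1/2) * ‖y - x'‖^2 ≤ D * ‖x - x'‖ :=
        key3 y hy x hx x' hx'
      rw [norm_sub_rev y x, norm_sub_rev y x'] at h3
      linarith
    have h := integral_mono_ae (hintQ x') ((hintQ x).const_mul _) hle
    rw [h1 x', integral_const_mul, h1 x, mul_one] at h
    have := Real.one_le_exp_iff.mp h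
    linarith
  refine ⟨?_, ?_⟩
  · -- sandwich
    intro x hx
    obtain ⟨y0, hy0⟩ := hΩne
    -- g is Lipschitz on Ω (via h2, symmetric argument)
    have hintP : ∀ y, Integrable (fun x => Real.exp (f x + g y - (1/2) * ‖x - y‖^2)) P := by
      intro y
      by_contra h
      have h' := h2 y
      rw [integral_undef h] at h'
      norm_num at h'
    have hPae : ∀ᵐ z ∂P, z ∈ Ω := by
      rw [MeasureTheory.ae_iff]
      exact hP
    have hlipg : ∀ y ∈ Ω, ∀ y' ∈ Ω, g y' - g y ≤ D * ‖y - y'‖ := by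
      intro y hy y' hy'
      have hle : (fun z => Real.exp (f z + g y - (1/2) * ‖z - y‖^2)) ≤ᵐ[P]
          fun z => Real.exp (g y - g y' + D * ‖y - y'‖) *
            Real.exp (f z + g y' - (1/2) * ‖z - y'‖^2) := by
        filter_upwards [hPae] with z hz
        rw [← Real.exp_add]
        apply Real.exp_le_exp.mpr
        have h3 := key3 z hz y' hy' y hy
        rw [norm_sub_rev y' y] at h3
        linarith
      have h := integral_mono_ae (hintP y) ((hintP y').const_mul _) hle
      rw [h2 y, integral_const_mul, h2 y', mul_one] at h
      have := Real.one_le_exp_iff.mp h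
      linarith
    have hgb : ∀ y ∈ Ω, |g y - g y0| ≤ D * D := by
      intro y hy
      have h0 : ‖y - y0‖ ≤ D := by
        rw [← dist_eq_norm]; exact Metric.dist_le_diam_of_mem hΩ.isBounded hy hy0
      have h0' : ‖y0 - y‖ ≤ D := by rw [norm_sub_rev]; exact h0
      have ha := hlipg y0 hy0 y hy
      have hb := hlipg y hy y0 hy0
      rw [abs_sub_le_iff]
      constructor
      · calc g y - g y0 ≤ D * ‖y0 - y‖ := ha
          _ ≤ D * D := by nlinarith
      · calc g y0 - g y ≤ D * ‖y - y0‖ := hb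
          _ ≤ D * D := by nlinarith
    set S := (fun y => (1/2) * ‖x - y‖^2 - g y) '' Ω with hSdef
    have hSne : S.Nonempty := ⟨_, ⟨y0, hy0, rfl⟩⟩
    have hbd : ∀ z ∈ S, -(|g y0| + D * D) ≤ z ∧ z ≤ (1/2) * D^2 + |g y0| + D * D := by
      rintro _ ⟨y, hy, rfl⟩
      have hxy : ‖x - y‖ ≤ D := by
        rw [← dist_eq_norm]; exact Metric.dist_le_diam_of_mem hΩ.isBounded hx hy
      have hxy0 : 0 ≤ ‖x - y‖ := norm_nonneg _
      have hgy := hgb y hy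
      have hg1 : g y - g y0 ≤ D * D := (abs_le.mp hgy).2
      have hg2 : -(D * D) ≤ g y - g y0 := (abs_le.mp hgy).1
      have habs := abs_le.mp (le_refl |g y0|)
      have h01 : -|g y0| ≤ g y0 := neg_abs_le _
      have h02 : g y0 ≤ |g y0| := le_abs_self _
      constructor
      · nlinarith
      · nlinarith
    have hbdA : BddAbove S := ⟨(1/2) * D^2 + |g y0| + D * D, fun z hz => (hbd z hz).2⟩
    have hbdB : BddBelow S := ⟨-(|g y0| + D * D), fun z hz => (hbd z hz).1⟩
    constructor
    · -- sInf S ≤ f x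
      have hle : (fun y => Real.exp (f x + g y - (1/2) * ‖x - y‖^2)) ≤ᵐ[Q]
          fun _ => Real.exp (f x - sInf S) := by
        filter_upwards [hQae] with y hy
        apply Real.exp_le_exp.mpr
        have : sInf S ≤ (1/2) * ‖x - y‖^2 - g y := csInf_le hbdB ⟨y, hy, rfl⟩
        linarith
      have h := integral_mono_ae (hintQ x) (integrable_const _) hle
      rw [h1 x, integral_const, probReal_univ] at h
      simp only [ENNReal.toReal_one, one_smul] at h
      have := Real.one_le_exp_iff.mp h
      linarith
    · -- f x ≤ sSup S
      have hle : (fun _ : Euc d => Real.exp (f x - sSup S)) ≤ᵐ[Q]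
          fun y => Real.exp (f x + g y - (1/2) * ‖x - y‖^2) := by
        filter_upwards [hQae] with y hy
        apply Real.exp_le_exp.mpr
        have : (1/2) * ‖x - y‖^2 - g y ≤ sSup S := le_csSup hbdA ⟨y, hy, rfl⟩
        linarith
      have h := integral_mono_ae (integrable_const _) (hintQ x) hle
      rw [h1 x, integral_const, probReal_univ] at h
      simp only [ENNReal.toReal_one, one_smul] at h
      have := Real.exp_le_one_iff.mp h
      linarith
  · intro x hx x' hx'
    rw [abs_sub_le_iff]
    refine ⟨hlip x hx x' hx', ?_⟩
    have := hlip x' hx' x hx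
    rwa [norm_sub_rev x' x] at this
end
end

section
/- For every dimension d and every multi-index α with |α| ≥ 1 there exists a constant C_{d,α} depending only on d and α such that: for every compact set Ω ⊂ ℝ^d with 0 ∈ Ω and diameter D_Ω, all probability measures P, Q supported in Ω, and any pair (f*, g*) of optimal entropic potentials for (P,Q), the function f* is C^∞ on Ω and ‖D^α f*‖_{∞,Ω} ≤ C_{d,α} (1 + D_Ω^{|α|}). -/
open MeasureTheory ProbabilityTheory Filter
open scoped ENNReal NNReal Topology

noncomputable section

set_option synthInstance.maxHeartbeats 1000000
set_option maxHeartbeats 1000000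
open Real
open scoped RealInnerProductSpace

namespace PotAux

variable {d : ℕ}

/-- increment a multi-index at coordinate `i` -/
def inc (i : Fin d) (β : Fin d → ℕ) : Fin d → ℕ := fun j => if j = i then β j + 1 else β j

def wt (β : Fin d → ℕ) : ℕ := ∑ j, β j

def pmon (β : Fin d → ℕ) (y : Euc d) : ℝ := ∏ j, (y j) ^ (β j)

lemma wt_inc (i : Fin d) (β : Fin d → ℕ) : wt (inc i β) = wt β + 1 := by
  unfold wt inc
  have : ∀ j, (if j = i then β j + 1 else β j) = β j + (if j = i then 1 else 0) := by
    intro j; split <;> simp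
  simp only [this, Finset.sum_add_distrib, Finset.sum_ite_eq' Finset.univ i (fun _ => 1)]
  simp

lemma wt_zero : wt (0 : Fin d → ℕ) = 0 := by simp [wt]

lemma pmon_zero (y : Euc d) : pmon (0 : Fin d → ℕ) y = 1 := by simp [pmon]

lemma pmon_inc (i : Fin d) (β : Fin d → ℕ) (y : Euc d) :
    pmon (inc i β) y = pmon β y * y i := by
  unfold pmon inc
  have : ∀ j, (y j) ^ (if j = i then β j + 1 else β j)
      = (y j) ^ (β j) * (if j = i then y j else 1) := by
    intro j; split <;> simp [pow_succ]
  simp only [this, Finset.prod_mul_distrib, Finset.prod_ite_eq' Finset.univ i (fun j => y j)]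
  simp

lemma abs_coord_le_norm (x : Euc d) (i : Fin d) : |x i| ≤ ‖x‖ := by
  have h1 : ⟪x, EuclideanSpace.single i (1:ℝ)⟫ = x i := by
    rw [EuclideanSpace.inner_single_right]; simp
  have h2 := abs_real_inner_le_norm x (EuclideanSpace.single i (1:ℝ))
  rw [h1, EuclideanSpace.norm_single] at h2
  simpa using h2

lemma abs_pmon_le {R : ℝ} (hR : 0 ≤ R) {y : Euc d} (hy : ‖y‖ ≤ R) (β : Fin d → ℕ) :
    |pmon β y| ≤ R ^ wt β := by
  unfold pmon wt
  rw [Finset.abs_prod, ← Finset.prod_pow_eq_pow_sum]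
  refine Finset.prod_le_prod (fun j _ => by positivity) (fun j _ => ?_)
  rw [abs_pow]
  exact pow_le_pow_left₀ (abs_nonneg _) ((abs_coord_le_norm y j).trans hy) _

lemma pow_le_one_add_pow {R : ℝ} (hR : 0 ≤ R) {w k : ℕ} (hw : w ≤ k) :
    R ^ w ≤ 1 + R ^ k := by
  rcases le_total R 1 with h | h
  · have : R ^ w ≤ 1 := pow_le_one₀ hR h
    nlinarith [pow_nonneg hR k]
  · have : R ^ w ≤ R ^ k := pow_le_pow_right₀ h hw
    nlinarith

lemma le_one_add_pow {R : ℝ} (hR : 0 ≤ R) {k : ℕ} (hk : 1 ≤ k) : R ≤ 1 + R ^ k := by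
  simpa using pow_le_one_add_pow hR (w := 1) hk

lemma sum_proj_apply (c : Fin d → ℝ) (j : Fin d) :
    (∑ i, c i • (EuclideanSpace.proj (𝕜 := ℝ) i)) (EuclideanSpace.single j (1:ℝ)) = c j := by
  rw [ContinuousLinearMap.sum_apply]
  have : ∀ i, (c i • EuclideanSpace.proj (𝕜 := ℝ) i) (EuclideanSpace.single j (1:ℝ))
      = if i = j then c i else 0 := by
    intro i
    rw [ContinuousLinearMap.smul_apply]
    have : EuclideanSpace.proj (𝕜 := ℝ) i (EuclideanSpace.single j (1:ℝ))
        = if i = j then (1:ℝ) else 0 := by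
      show (EuclideanSpace.single j (1:ℝ)) i = _
      rw [EuclideanSpace.single_apply]
    rw [this]; split <;> simp
  simp only [this, Finset.sum_ite_eq' Finset.univ j c]
  simp

lemma clm_ext {L M : Euc d →L[ℝ] ℝ}
    (h : ∀ i, L (EuclideanSpace.single i (1:ℝ)) = M (EuclideanSpace.single i (1:ℝ))) :
    L = M := by
  apply ContinuousLinearMap.coe_injective
  apply Module.Basis.ext (EuclideanSpace.basisFun (Fin d) ℝ).toBasis
  intro i
  have hb : (EuclideanSpace.basisFun (Fin d) ℝ).toBasis i = EuclideanSpace.single i (1:ℝ) := by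
    simp [EuclideanSpace.basisFun_apply]
  rw [hb]
  exact h i

end PotAux
namespace PotAux

variable {d : ℕ}

section W

variable (Q : Measure (Euc d)) (ρ : Euc d → ℝ)

/-- weighted exponential moment -/
def Wfn (β : Fin d → ℕ) (x : Euc d) : ℝ := ∫ y, pmon β y * Real.exp ⟪y, x⟫ * ρ y ∂Q

/-- normalized moment -/
def mfn (β : Fin d → ℕ) (x : Euc d) : ℝ := Wfn Q ρ β x / Wfn Q ρ 0 x

variable (R : ℝ)

structure Nice : Prop where
  fin : IsFiniteMeasure Q
  meas : Measurable ρ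
  nonneg : ∀ y, 0 ≤ ρ y
  int : Integrable ρ Q
  supp : ∀ᵐ y ∂Q, ‖y‖ ≤ R
  Rnn : 0 ≤ R
  pos : ∀ x, 0 < Wfn Q ρ 0 x

variable {Q ρ R}
variable (hN : Nice Q ρ R)
include hN

lemma cont_py (β : Fin d → ℕ) (x : Euc d) :
    Continuous (fun y : Euc d => pmon β y * Real.exp ⟪y, x⟫) := by
  apply Continuous.mul
  · exact continuous_finset_prod _ fun j _ =>
      ((EuclideanSpace.proj (𝕜 := ℝ) j).continuous).pow _
  · exact Real.continuous_exp.comp (continuous_id.inner continuous_const)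

lemma aesm_integrand (β : Fin d → ℕ) (x : Euc d) :
    AEStronglyMeasurable (fun y : Euc d => pmon β y * Real.exp ⟪y, x⟫ * ρ y) Q :=
  ((cont_py hN β x).aestronglyMeasurable).mul (hN.meas.aestronglyMeasurable)

lemma abs_integrand_le (β : Fin d → ℕ) {x : Euc d} {B : ℝ} (hB : ‖x‖ ≤ B) {y : Euc d}
    (hy : ‖y‖ ≤ R) :
    |pmon β y * Real.exp ⟪y, x⟫ * ρ y| ≤ R ^ wt β * Real.exp (B * R) * ρ y := by
  have hR := hN.Rnn
  have hBnn : 0 ≤ B := le_trans (norm_nonneg x) hB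
  have h1 : |pmon β y| ≤ R ^ wt β := abs_pmon_le hR hy β
  have h2 : Real.exp ⟪y, x⟫ ≤ Real.exp (B * R) := by
    apply Real.exp_le_exp.2
    calc ⟪y, x⟫ ≤ ‖y‖ * ‖x‖ := real_inner_le_norm y x
    _ ≤ R * B := mul_le_mul hy hB (norm_nonneg x) hR
    _ = B * R := mul_comm _ _
  have h3 : 0 ≤ ρ y := hN.nonneg y
  rw [abs_mul, abs_mul, abs_of_nonneg h3, abs_of_nonneg (Real.exp_pos _).le]
  apply mul_le_mul_of_nonneg_right _ h3
  exact mul_le_mul h1 h2 (Real.exp_pos _).le (by positivity)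

lemma integrable_integrand (β : Fin d → ℕ) (x : Euc d) :
    Integrable (fun y : Euc d => pmon β y * Real.exp ⟪y, x⟫ * ρ y) Q := by
  refine Integrable.mono' ((hN.int.const_mul (R ^ wt β * Real.exp (‖x‖ * R)))) 
    (aesm_integrand hN β x) ?_
  filter_upwards [hN.supp] with y hy
  rw [Real.norm_eq_abs]
  exact abs_integrand_le hN β le_rfl hy

lemma abs_W_le (β : Fin d → ℕ) (x : Euc d) :
    |Wfn Q ρ β x| ≤ R ^ wt β * Wfn Q ρ 0 x := by
  unfold Wfn
  have h1 : |∫ y, pmon β y * Real.exp ⟪y, x⟫ * ρ y ∂Q|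
      ≤ ∫ y, |pmon β y * Real.exp ⟪y, x⟫ * ρ y| ∂Q := by
    have h0 := norm_integral_le_integral_norm (μ := Q)
      (fun y : Euc d => pmon β y * Real.exp ⟪y, x⟫ * ρ y)
    simpa only [Real.norm_eq_abs] using h0
  refine h1.trans ?_
  have h2 : ∫ y, R ^ wt β * (pmon 0 y * Real.exp ⟪y, x⟫ * ρ y) ∂Q
      = R ^ wt β * ∫ y, pmon 0 y * Real.exp ⟪y, x⟫ * ρ y ∂Q := integral_const_mul _ _
  rw [← h2]
  apply integral_mono_ae (integrable_integrand hN β x).abs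
    (((integrable_integrand hN 0 x)).const_mul _)
  filter_upwards [hN.supp] with y hy
  have h3 : 0 ≤ ρ y := hN.nonneg y
  rw [abs_mul, abs_mul, abs_of_nonneg h3, abs_of_nonneg (Real.exp_pos _).le, pmon_zero]
  rw [one_mul, ← mul_assoc]
  exact mul_le_mul_of_nonneg_right
    (mul_le_mul_of_nonneg_right (abs_pmon_le hN.Rnn hy β) (Real.exp_pos _).le) h3

lemma abs_m_le (β : Fin d → ℕ) (x : Euc d) : |mfn Q ρ β x| ≤ R ^ wt β := by
  unfold mfn
  rw [abs_div, abs_of_pos (hN.pos x), div_le_iff₀ (hN.pos x)]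
  exact abs_W_le hN β x

end W

end PotAux
namespace PotAux

variable {d : ℕ} {Q : Measure (Euc d)} {ρ : Euc d → ℝ} {R : ℝ}
variable (hN : Nice Q ρ R)
include hN

/-- the candidate derivative of `Wfn β` -/
def DW (Q : Measure (Euc d)) (ρ : Euc d → ℝ) (β : Fin d → ℕ) (x : Euc d) : Euc d →L[ℝ] ℝ :=
  ∑ i, Wfn Q ρ (inc i β) x • (EuclideanSpace.proj (𝕜 := ℝ) i)

lemma integrand_hasFDerivAt (β : Fin d → ℕ) (y : Euc d) (x : Euc d) :
    HasFDerivAt (fun x : Euc d => pmon β y * Real.exp ⟪y, x⟫ * ρ y)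
      ((pmon β y * Real.exp ⟪y, x⟫ * ρ y) • innerSL ℝ y) x := by
  have h1 : HasFDerivAt (fun x : Euc d => ⟪y, x⟫) (innerSL ℝ y) x :=
    (innerSL ℝ y).hasFDerivAt
  have h2 := h1.exp
  have h3 := (h2.const_mul (pmon β y)).mul_const (ρ y)
  have e : (pmon β y * Real.exp ⟪y, x⟫ * ρ y) • innerSL ℝ y
      = ρ y • pmon β y • Real.exp ⟪y, x⟫ • innerSL ℝ y := by
    rw [smul_smul, smul_smul]
    congr 1
    ring
  rw [e]; exact h3

lemma integrable_CLM (β : Fin d → ℕ) (x : Euc d) :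
    Integrable (fun y : Euc d => (pmon β y * Real.exp ⟪y, x⟫ * ρ y) • innerSL ℝ y) Q := by
  have hsm : AEStronglyMeasurable
      (fun y : Euc d => (pmon β y * Real.exp ⟪y, x⟫ * ρ y) • innerSL ℝ y) Q := by
    exact (aesm_integrand hN β x).smul
      (Continuous.aestronglyMeasurable (map_continuous (innerSL ℝ)))
  refine Integrable.mono' ((hN.int.const_mul (R ^ wt β * Real.exp (‖x‖ * R) * R))) hsm ?_
  filter_upwards [hN.supp] with y hy
  refine le_trans (ContinuousLinearMap.opNorm_smul_le _ _) ?_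
  rw [Real.norm_eq_abs, innerSL_apply_norm]
  calc |pmon β y * Real.exp ⟪y, x⟫ * ρ y| * ‖y‖
      ≤ (R ^ wt β * Real.exp (‖x‖ * R) * ρ y) * R := by
        apply mul_le_mul (abs_integrand_le hN β le_rfl hy) hy (norm_nonneg _)
        have := hN.nonneg y
        have := hN.Rnn
        positivity
  _ = R ^ wt β * Real.exp (‖x‖ * R) * R * ρ y := by ring

lemma hasFDerivAt_W (β : Fin d → ℕ) (x₀ : Euc d) :
    HasFDerivAt (Wfn Q ρ β) (DW Q ρ β x₀) x₀ := by
  have key : HasFDerivAt (fun x => ∫ y, pmon β y * Real.exp ⟪y, x⟫ * ρ y ∂Q)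
      (∫ y, (pmon β y * Real.exp ⟪y, x₀⟫ * ρ y) • innerSL ℝ y ∂Q) x₀ := by
    apply hasFDerivAt_integral_of_dominated_of_fderiv_le
      (F' := fun (x : Euc d) (y : Euc d) => (pmon β y * Real.exp ⟪y, x⟫ * ρ y) • innerSL ℝ y)
      (bound := fun y => (R ^ wt β * Real.exp ((‖x₀‖ + 1) * R) * R) * ρ y)
      (s := Metric.ball x₀ 1) (Metric.ball_mem_nhds x₀ one_pos)
    · exact Eventually.of_forall fun x => aesm_integrand hN β x
    · exact integrable_integrand hN β x₀
    · exact (integrable_CLM hN β x₀).aestronglyMeasurable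
    · filter_upwards [hN.supp] with y hy
      intro x hx
      have hxn : ‖x‖ ≤ ‖x₀‖ + 1 := by
        have := mem_ball_iff_norm.1 hx
        have h := norm_le_norm_add_norm_sub' x x₀
        linarith [this, h]
      refine le_trans (ContinuousLinearMap.opNorm_smul_le _ _) ?_
      rw [Real.norm_eq_abs, innerSL_apply_norm]
      calc |pmon β y * Real.exp ⟪y, x⟫ * ρ y| * ‖y‖
          ≤ (R ^ wt β * Real.exp ((‖x₀‖ + 1) * R) * ρ y) * R := by
            apply mul_le_mul (abs_integrand_le hN β hxn hy) hy (norm_nonneg _)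
            have := hN.nonneg y
            have := hN.Rnn
            positivity
      _ = R ^ wt β * Real.exp ((‖x₀‖ + 1) * R) * R * ρ y := by ring
    · exact hN.int.const_mul _
    · filter_upwards with y
      intro x _
      exact integrand_hasFDerivAt hN β y x
  have heq : (∫ y, (pmon β y * Real.exp ⟪y, x₀⟫ * ρ y) • innerSL ℝ y ∂Q) = DW Q ρ β x₀ := by
    apply clm_ext
    intro i
    rw [ContinuousLinearMap.integral_apply (integrable_CLM hN β x₀)]
    unfold DW
    rw [sum_proj_apply]
    unfold Wfn
    apply integral_congr_ae
    filter_upwards with y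
    rw [ContinuousLinearMap.smul_apply, innerSL_apply_apply]
    have : ⟪y, EuclideanSpace.single i (1:ℝ)⟫ = y i := by
      rw [EuclideanSpace.inner_single_right]; simp
    rw [this, pmon_inc]
    simp only [smul_eq_mul]
    ring
  rw [← heq]
  exact key

lemma differentiable_W (β : Fin d → ℕ) : Differentiable ℝ (Wfn Q ρ β) :=
  fun x => (hasFDerivAt_W hN β x).differentiableAt

lemma fderiv_W (β : Fin d → ℕ) : fderiv ℝ (Wfn Q ρ β) = DW Q ρ β := by
  funext x; exact (hasFDerivAt_W hN β x).fderiv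

lemma contDiff_W_nat (n : ℕ) (β : Fin d → ℕ) : ContDiff ℝ (n : ℕ) (Wfn Q ρ β) := by
  induction n generalizing β with
  | zero =>
    rw [show ((0:ℕ) : WithTop ℕ∞) = 0 by rfl, contDiff_zero]
    exact (differentiable_W hN β).continuous
  | succ n ih =>
    have hcast : ((n + 1 : ℕ) : WithTop ℕ∞) = (n : WithTop ℕ∞) + 1 := by
      push_cast; rfl
    rw [hcast, contDiff_succ_iff_fderiv]
    refine ⟨differentiable_W hN β, ?_, ?_⟩
    · intro h; exact absurd h (by exact_mod_cast WithTop.natCast_ne_top n)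
    · rw [fderiv_W hN]
      unfold DW
      apply ContDiff.sum
      intro i _
      exact (ih (inc i β)).smul contDiff_const

lemma contDiff_W (β : Fin d → ℕ) : ContDiff ℝ ((⊤ : ℕ∞) : WithTop ℕ∞) (Wfn Q ρ β) := by
  rw [contDiff_infty]
  exact fun n => contDiff_W_nat hN n β

lemma contDiff_m (β : Fin d → ℕ) : ContDiff ℝ ((⊤ : ℕ∞) : WithTop ℕ∞) (mfn Q ρ β) :=
  (contDiff_W hN β).div (contDiff_W hN 0) (fun x => (hN.pos x).ne')

lemma hasFDerivAt_m (β : Fin d → ℕ) (x : Euc d) :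
    HasFDerivAt (mfn Q ρ β)
      (∑ i, (mfn Q ρ (inc i β) x - mfn Q ρ β x * mfn Q ρ (inc i 0) x) •
        (EuclideanSpace.proj (𝕜 := ℝ) i)) x := by
  have hZ : Wfn Q ρ 0 x ≠ 0 := (hN.pos x).ne'
  have hinv : HasFDerivAt (fun x => (Wfn Q ρ 0 x)⁻¹)
      ((ContinuousLinearMap.smulRight (1 : ℝ →L[ℝ] ℝ) (-((Wfn Q ρ 0 x) ^ 2)⁻¹)).comp
        (DW Q ρ 0 x)) x :=
    (hasFDerivAt_inv hZ).comp x (hasFDerivAt_W hN 0 x)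
  have hmul := (hasFDerivAt_W hN β x).mul hinv
  have heq : (Wfn Q ρ β * fun x => (Wfn Q ρ 0 x)⁻¹) = mfn Q ρ β := by
    funext z; rw [mfn, div_eq_mul_inv]; rfl
  rw [heq] at hmul
  refine hmul.congr_fderiv ?_
  apply clm_ext
  intro i
  rw [sum_proj_apply, ContinuousLinearMap.add_apply, ContinuousLinearMap.smul_apply,
    ContinuousLinearMap.smul_apply, ContinuousLinearMap.comp_apply]
  have hDW : ∀ γ, DW Q ρ γ x (EuclideanSpace.single i (1:ℝ)) = Wfn Q ρ (inc i γ) x := by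
    intro γ; unfold DW; rw [sum_proj_apply]
  rw [hDW, ContinuousLinearMap.smulRight_apply, hDW]
  simp only [ContinuousLinearMap.one_apply, smul_eq_mul, mfn]
  field_simp
  ring

end PotAux
namespace PotAux

variable {d : ℕ}

/-- formal monomial: list of multi-indices -/
abbrev Mon (d : ℕ) := List (Fin d → ℕ)
/-- formal polynomial: list of (coefficient, monomial) -/
abbrev Poly (d : ℕ) := List (ℝ × Mon d)

def wtM (L : Mon d) : ℕ := (L.map wt).sum

def coefSum (P : Poly d) : ℝ := (P.map (fun t => |t.1|)).sum

def WtLE (k : ℕ) (P : Poly d) : Prop := ∀ t ∈ P, wtM t.2 ≤ k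

/-- formal derivative of a monomial in direction `i` -/
def dMon (i : Fin d) : Mon d → Poly d
  | [] => []
  | β :: L => (1, inc i β :: L) :: (-1, inc i 0 :: β :: L) ::
      (dMon i L).map (fun s => (s.1, β :: s.2))

/-- formal derivative of a polynomial in direction `i` -/
def dPoly (i : Fin d) (P : Poly d) : Poly d :=
  P.flatMap (fun t => (dMon i t.2).map (fun s => (t.1 * s.1, s.2)))

section eval

variable (Q : Measure (Euc d)) (ρ : Euc d → ℝ)

def evalM (x : Euc d) (L : Mon d) : ℝ := (L.map (fun β => mfn Q ρ β x)).prod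

def evalP (x : Euc d) (P : Poly d) : ℝ := (P.map (fun t => t.1 * evalM Q ρ x t.2)).sum

lemma evalM_nil (x : Euc d) : evalM Q ρ x ([] : Mon d) = 1 := rfl

lemma evalM_cons (x : Euc d) (β : Fin d → ℕ) (L : Mon d) :
    evalM Q ρ x (β :: L) = mfn Q ρ β x * evalM Q ρ x L := by
  simp [evalM]

lemma evalP_nil (x : Euc d) : evalP Q ρ x ([] : Poly d) = 0 := rfl

lemma evalP_cons (x : Euc d) (t : ℝ × Mon d) (P : Poly d) :
    evalP Q ρ x (t :: P) = t.1 * evalM Q ρ x t.2 + evalP Q ρ x P := by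
  simp [evalP]

lemma evalP_append (x : Euc d) (P₁ P₂ : Poly d) :
    evalP Q ρ x (P₁ ++ P₂) = evalP Q ρ x P₁ + evalP Q ρ x P₂ := by
  simp [evalP]

lemma evalP_map_scale (x : Euc d) (c : ℝ) (P : Poly d) :
    evalP Q ρ x (P.map (fun s => (c * s.1, s.2))) = c * evalP Q ρ x P := by
  induction P with
  | nil => simp [evalP]
  | cons t P ih =>
    simp only [List.map_cons, evalP_cons] at *
    rw [ih]; ring

lemma evalP_map_consMon (x : Euc d) (β : Fin d → ℕ) (P : Poly d) :
    evalP Q ρ x (P.map (fun s => (s.1, β :: s.2))) = mfn Q ρ β x * evalP Q ρ x P := by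
  induction P with
  | nil => simp [evalP]
  | cons t P ih =>
    simp only [List.map_cons, evalP_cons] at *
    rw [ih, evalM_cons]; ring

variable {Q ρ} {R : ℝ} (hN : Nice Q ρ R)
include hN

lemma hasFDerivAt_evalM (L : Mon d) (x : Euc d) :
    HasFDerivAt (fun x => evalM Q ρ x L)
      (∑ i, evalP Q ρ x (dMon i L) • (EuclideanSpace.proj (𝕜 := ℝ) i)) x := by
  induction L with
  | nil =>
    simp only [evalM_nil]
    have : (fun _ : Euc d => (1:ℝ)) = fun _ => 1 := rfl
    have h0 : ∀ i, evalP Q ρ x (dMon i ([] : Mon d)) = 0 := fun i => rfl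
    simp only [h0, zero_smul, Finset.sum_const_zero]
    exact hasFDerivAt_const 1 x
  | cons β L ih =>
    have h := (hasFDerivAt_m hN β x).mul ih
    have heq : (mfn Q ρ β * fun x => evalM Q ρ x L) = fun x => evalM Q ρ x (β :: L) := by
      funext z; rw [evalM_cons]; rfl
    rw [heq] at h
    refine h.congr_fderiv (Eq.symm ?_)
    apply clm_ext
    intro j
    rw [sum_proj_apply, ContinuousLinearMap.add_apply, ContinuousLinearMap.smul_apply,
      ContinuousLinearMap.smul_apply, sum_proj_apply, sum_proj_apply]
    show evalP Q ρ x (dMon j (β :: L)) = _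
    rw [dMon, evalP_cons, evalP_cons, evalP_map_consMon, evalM_cons, evalM_cons, evalM_cons]
    simp only [smul_eq_mul]
    ring

lemma hasFDerivAt_evalP (P : Poly d) (x : Euc d) :
    HasFDerivAt (fun x => evalP Q ρ x P)
      (∑ i, evalP Q ρ x (dPoly i P) • (EuclideanSpace.proj (𝕜 := ℝ) i)) x := by
  induction P with
  | nil =>
    have h0 : ∀ i, evalP Q ρ x (dPoly i ([] : Poly d)) = 0 := fun i => rfl
    simp only [evalP_nil, h0, zero_smul, Finset.sum_const_zero]
    exact hasFDerivAt_const 0 x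
  | cons t P ih =>
    have h := ((hasFDerivAt_evalM hN t.2 x).const_mul t.1).add ih
    have heq : ((fun y => t.1 * evalM Q ρ y t.2) + fun x => evalP Q ρ x P)
        = fun x => evalP Q ρ x (t :: P) := by
      funext z; rw [evalP_cons]; rfl
    rw [heq] at h
    refine h.congr_fderiv (Eq.symm ?_)
    apply clm_ext
    intro j
    rw [sum_proj_apply, ContinuousLinearMap.add_apply, ContinuousLinearMap.smul_apply,
      sum_proj_apply, sum_proj_apply]
    show evalP Q ρ x (dPoly j (t :: P)) = _
    rw [dPoly, List.flatMap_cons, evalP_append]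
    rw [evalP_map_scale Q ρ x t.1 (dMon j t.2), ← dPoly]
    simp only [smul_eq_mul]

lemma contDiff_evalM (L : Mon d) : ContDiff ℝ ((⊤ : ℕ∞) : WithTop ℕ∞) (fun x => evalM Q ρ x L) := by
  induction L with
  | nil => exact contDiff_const
  | cons β L ih =>
    have h := (contDiff_m hN β).mul ih
    simpa only [evalM_cons] using h

lemma contDiff_evalP (P : Poly d) : ContDiff ℝ ((⊤ : ℕ∞) : WithTop ℕ∞) (fun x => evalP Q ρ x P) := by
  induction P with
  | nil => exact contDiff_const
  | cons t P ih =>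
    have h := ((contDiff_const (c := t.1)).mul (contDiff_evalM hN t.2)).add ih
    simpa only [evalP_cons] using h

/-- bound on evaluated monomials -/
lemma abs_evalM_le (L : Mon d) (x : Euc d) : |evalM Q ρ x L| ≤ R ^ wtM L := by
  induction L with
  | nil => simp [evalM_nil, wtM]
  | cons β L ih =>
    rw [evalM_cons, abs_mul]
    have h1 := abs_m_le hN β x
    have h2 : wtM (β :: L) = wt β + wtM L := by simp [wtM]
    rw [h2, pow_add]
    exact mul_le_mul h1 ih (abs_nonneg _) (pow_nonneg hN.Rnn _)

lemma abs_evalP_le {k : ℕ} {P : Poly d} (hP : WtLE k P) (x : Euc d) :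
    |evalP Q ρ x P| ≤ coefSum P * (1 + R ^ k) := by
  induction P with
  | nil => simp [evalP_nil, coefSum]
  | cons t P ih =>
    have ht : wtM t.2 ≤ k := hP t List.mem_cons_self
    have hP' : WtLE k P := fun s hs => hP s (List.mem_cons_of_mem t hs)
    rw [evalP_cons]
    have hcs : coefSum (t :: P) = |t.1| + coefSum P := by simp [coefSum]
    rw [hcs]
    calc |t.1 * evalM Q ρ x t.2 + evalP Q ρ x P|
        ≤ |t.1 * evalM Q ρ x t.2| + |evalP Q ρ x P| := abs_add_le _ _
    _ ≤ |t.1| * (1 + R ^ k) + coefSum P * (1 + R ^ k) := by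
        apply add_le_add _ (ih hP')
        rw [abs_mul]
        apply mul_le_mul_of_nonneg_left _ (abs_nonneg _)
        exact (abs_evalM_le hN t.2 x).trans (pow_le_one_add_pow hN.Rnn ht)
    _ = (|t.1| + coefSum P) * (1 + R ^ k) := by ring

end eval

/-! weight bookkeeping (purely formal) -/

lemma wtM_dMon (i : Fin d) : ∀ (L : Mon d), ∀ s ∈ dMon i L, wtM s.2 = wtM L + 1 := by
  intro L
  induction L with
  | nil => intro s hs; simp [dMon] at hs
  | cons β L ih =>
    intro s hs
    rw [dMon] at hs
    simp only [List.mem_cons] at hs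
    rcases hs with h | h | h
    · subst h; simp [wtM, wt_inc]; ring
    · subst h; simp [wtM, wt_inc, wt_zero]; ring
    · rcases List.mem_map.1 h with ⟨u, hu, rfl⟩
      have := ih u hu
      simp only [wtM, List.map_cons, List.sum_cons] at *
      omega

lemma WtLE_dPoly {k : ℕ} {P : Poly d} (i : Fin d) (hP : WtLE k P) :
    WtLE (k + 1) (dPoly i P) := by
  intro s hs
  rw [dPoly] at hs
  rcases List.mem_flatMap.1 hs with ⟨t, ht, hs'⟩
  rcases List.mem_map.1 hs' with ⟨u, hu, rfl⟩
  have h1 := wtM_dMon i t.2 u hu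
  have h2 := hP t ht
  simp only [h1]
  omega

lemma coefSum_nonneg (P : Poly d) : 0 ≤ coefSum P := by
  induction P with
  | nil => simp [coefSum]
  | cons t P ih => simp [coefSum] at *; positivity

end PotAux
namespace PotAux

variable {d : ℕ}

/-- state: `a·½‖x‖² + ∑ bᵢ xᵢ + c·log Z + poly of moments` -/
structure SD (d : ℕ) where
  a : ℝ
  b : Fin d → ℝ
  c : ℝ
  P : Poly d

def dS (i : Fin d) (S : SD d) : SD d :=
  ⟨0, fun j => if j = i then S.a else 0, 0,
    (S.b i, []) :: (S.c, [inc i 0]) :: dPoly i S.P⟩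

def AC (S : SD d) : Prop := S.a = 0 ∧ S.c = 0

lemma AC_dS (i : Fin d) (S : SD d) : AC (dS i S) := ⟨rfl, rfl⟩

lemma AC_iter {i : Fin d} {S : SD d} {n : ℕ} (h : AC S ∨ 1 ≤ n) : AC ((dS i)^[n] S) := by
  cases n with
  | zero => rcases h with h | h; exact h; omega
  | succ n => rw [Function.iterate_succ_apply']; exact AC_dS _ _

lemma WtLE_mono {k k' : ℕ} (hk : k ≤ k') {P : Poly d} (h : WtLE k P) : WtLE k' P :=
  fun t ht => (h t ht).trans hk

lemma WtLE_dS {k : ℕ} {S : SD d} (h : WtLE k S.P) (i : Fin d) : WtLE (k + 1) (dS i S).P := by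
  intro t ht
  simp only [dS, List.mem_cons] at ht
  rcases ht with rfl | rfl | ht
  · simp [wtM]
  · simp [wtM, wt_inc, wt_zero]
  · exact WtLE_dPoly i h t ht

lemma WtLE_iter {k : ℕ} {S : SD d} (h : WtLE k S.P) (i : Fin d) (n : ℕ) :
    WtLE (k + n) ((dS i)^[n] S).P := by
  induction n with
  | zero => simpa using h
  | succ n ih =>
    rw [Function.iterate_succ_apply']
    exact WtLE_mono (by omega) (WtLE_dS ih i)

def foldS (αn : Fin d → ℕ) (l : List (Fin d)) (S : SD d) : SD d :=
  l.foldr (fun i S => (dS i)^[αn i] S) S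

lemma WtLE_foldS {k : ℕ} {S : SD d} (h : WtLE k S.P) (αn : Fin d → ℕ) (l : List (Fin d)) :
    WtLE (k + (l.map αn).sum) (foldS αn l S).P := by
  induction l with
  | nil => simpa [foldS] using h
  | cons i l ih =>
    show WtLE _ ((dS i)^[αn i] (foldS αn l S)).P
    refine WtLE_mono ?_ (WtLE_iter ih i (αn i))
    simp only [List.map_cons, List.sum_cons]
    omega

lemma AC_foldS {S : SD d} (αn : Fin d → ℕ) (l : List (Fin d))
    (h : AC S ∨ 1 ≤ (l.map αn).sum) : AC (foldS αn l S) := by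
  induction l with
  | nil =>
    rcases h with h | h
    · exact h
    · simp at h
  | cons i l ih =>
    show AC ((dS i)^[αn i] (foldS αn l S))
    apply AC_iter
    simp only [List.map_cons, List.sum_cons] at h
    rcases h with h | h
    · exact Or.inl (ih (Or.inl h))
    · rcases Nat.lt_or_ge (αn i) 1 with hi | hi
      · have : αn i = 0 := by omega
        exact Or.inl (ih (Or.inr (by omega)))
      · exact Or.inr hi

section evalS

variable (Q : Measure (Euc d)) (ρ : Euc d → ℝ)

def evalS (S : SD d) (x : Euc d) : ℝ :=
  S.a * ((1:ℝ)/2 * ‖x‖^2) + (∑ i, S.b i * x i) + S.c * Real.log (Wfn Q ρ 0 x)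
    + evalP Q ρ x S.P

variable {Q ρ} {R : ℝ} (hN : Nice Q ρ R)
include hN

lemma hasFDerivAt_evalS (S : SD d) (x : Euc d) :
    HasFDerivAt (evalS Q ρ S)
      (∑ i, evalS Q ρ (dS i S) x • (EuclideanSpace.proj (𝕜 := ℝ) i)) x := by
  classical
  -- quadratic part
  have hq0 : HasFDerivAt (fun x : Euc d => ⟪x, x⟫)
      ((fderivInnerCLM ℝ (x, x)).comp ((ContinuousLinearMap.id ℝ (Euc d)).prod
        (ContinuousLinearMap.id ℝ (Euc d)))) x := by
    have := (hasFDerivAt_id x).inner ℝ (hasFDerivAt_id x)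
    simpa using this
  have hq : HasFDerivAt (fun x : Euc d => S.a * ((1:ℝ)/2 * ‖x‖^2))
      ((S.a * ((1:ℝ)/2)) • ((fderivInnerCLM ℝ (x, x)).comp
        ((ContinuousLinearMap.id ℝ (Euc d)).prod (ContinuousLinearMap.id ℝ (Euc d))))) x := by
    have h := hq0.const_mul (S.a * ((1:ℝ)/2))
    have heq : (fun x : Euc d => S.a * ((1:ℝ)/2) * ⟪x, x⟫)
        = fun x : Euc d => S.a * ((1:ℝ)/2 * ‖x‖^2) := by
      funext z; rw [real_inner_self_eq_norm_sq]; ring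
    rwa [heq] at h
  -- linear part
  have hlin : HasFDerivAt (fun x : Euc d => ∑ i, S.b i * x i)
      (∑ i, S.b i • (EuclideanSpace.proj (𝕜 := ℝ) i)) x := by
    apply HasFDerivAt.fun_sum
    intro i _
    exact (EuclideanSpace.proj (𝕜 := ℝ) i).hasFDerivAt.const_mul (S.b i)
  -- log part
  have hlog : HasFDerivAt (fun x : Euc d => S.c * Real.log (Wfn Q ρ 0 x))
      (S.c • ((Wfn Q ρ 0 x)⁻¹ • DW Q ρ 0 x)) x :=
    ((hasFDerivAt_W hN 0 x).log (hN.pos x).ne').const_mul S.c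
  have hP := hasFDerivAt_evalP hN S.P x
  have h := ((hq.add hlin).add hlog).add hP
  refine h.congr_fderiv (Eq.symm ?_)
  apply clm_ext
  intro i
  rw [sum_proj_apply]
  rw [ContinuousLinearMap.add_apply, ContinuousLinearMap.add_apply,
    ContinuousLinearMap.add_apply, ContinuousLinearMap.smul_apply,
    ContinuousLinearMap.smul_apply, ContinuousLinearMap.smul_apply, sum_proj_apply,
    ContinuousLinearMap.sum_apply]
  have hDW : DW Q ρ 0 x (EuclideanSpace.single i (1:ℝ)) = Wfn Q ρ (inc i 0) x := by
    unfold DW; rw [sum_proj_apply]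
  have hquadval : ((fderivInnerCLM ℝ (x, x)).comp
      ((ContinuousLinearMap.id ℝ (Euc d)).prod (ContinuousLinearMap.id ℝ (Euc d))))
        (EuclideanSpace.single i (1:ℝ)) = 2 * x i := by
    rw [ContinuousLinearMap.comp_apply]
    simp only [ContinuousLinearMap.prod_apply, ContinuousLinearMap.id_apply]
    rw [fderivInnerCLM_apply]
    have h1 : ⟪x, EuclideanSpace.single i (1:ℝ)⟫ = x i := by
      rw [EuclideanSpace.inner_single_right]; simp
    have h2 : ⟪EuclideanSpace.single i (1:ℝ), x⟫ = x i := by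
      rw [real_inner_comm]; exact h1
    rw [h1, h2]; ring
  have hlinval : ∀ j, (S.b j • (EuclideanSpace.proj (𝕜 := ℝ) j))
      (EuclideanSpace.single i (1:ℝ)) = if j = i then S.b j else 0 := by
    intro j
    rw [ContinuousLinearMap.smul_apply]
    have : EuclideanSpace.proj (𝕜 := ℝ) j (EuclideanSpace.single i (1:ℝ))
        = if j = i then (1:ℝ) else 0 := by
      show (EuclideanSpace.single i (1:ℝ)) j = _
      rw [EuclideanSpace.single_apply]
    rw [this]
    split <;> simp
  rw [hquadval, hDW]
  simp only [hlinval, Finset.sum_ite_eq' Finset.univ i (fun j => S.b j), Finset.mem_univ,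
    if_true]
  -- now compute evalS (dS i S) x
  show evalS Q ρ (dS i S) x = _
  unfold evalS dS
  simp only []
  rw [evalP_cons, evalP_cons, evalM_nil, evalM_cons, evalM_nil]
  have hsum : (∑ j, (if j = i then S.a else 0) * x j) = S.a * x i := by
    rw [Finset.sum_congr rfl (fun j _ => ite_mul (j = i) S.a 0 (x j))]
    simp only [zero_mul]
    rw [Finset.sum_ite_eq' Finset.univ i (fun j => S.a * x j)]
    simp
  rw [hsum]
  have hm : mfn Q ρ (inc i 0) x = (Wfn Q ρ 0 x)⁻¹ * Wfn Q ρ (inc i 0) x := by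
    rw [mfn, div_eq_inv_mul]
  simp only [smul_eq_mul]
  rw [hm, ← ContinuousLinearMap.sum_apply, sum_proj_apply]
  ring

lemma dirD_evalS (S : SD d) (i : Fin d) :
    dirD (EuclideanSpace.single i (1:ℝ)) (evalS Q ρ S) = evalS Q ρ (dS i S) := by
  funext x
  show fderiv ℝ (evalS Q ρ S) x (EuclideanSpace.single i (1:ℝ)) = _
  rw [(hasFDerivAt_evalS hN S x).fderiv, sum_proj_apply]

lemma dirD_iter_evalS (S : SD d) (i : Fin d) (n : ℕ) :
    (dirD (EuclideanSpace.single i (1:ℝ)))^[n] (evalS Q ρ S) = evalS Q ρ ((dS i)^[n] S) := by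
  induction n with
  | zero => rfl
  | succ n ih =>
    rw [Function.iterate_succ_apply', Function.iterate_succ_apply', ih, dirD_evalS hN]

lemma foldr_evalS (αn : Fin d → ℕ) (l : List (Fin d)) (S : SD d) :
    l.foldr (fun i g => (dirD (EuclideanSpace.single i (1:ℝ)))^[αn i] g) (evalS Q ρ S)
      = evalS Q ρ (foldS αn l S) := by
  induction l with
  | nil => rfl
  | cons i l ih =>
    show (dirD (EuclideanSpace.single i (1:ℝ)))^[αn i] _ = _
    rw [ih]
    exact dirD_iter_evalS hN _ i (αn i)

lemma contDiff_evalS (S : SD d) : ContDiff ℝ ((⊤ : ℕ∞) : WithTop ℕ∞) (evalS Q ρ S) := by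
  unfold evalS
  apply ContDiff.add
  apply ContDiff.add
  apply ContDiff.add
  · exact contDiff_const.mul (contDiff_const.mul (contDiff_norm_sq ℝ))
  · exact ContDiff.sum fun i _ =>
      contDiff_const.mul ((EuclideanSpace.proj (𝕜 := ℝ) i).contDiff)
  · exact contDiff_const.mul ((contDiff_W hN 0).log fun x => (hN.pos x).ne')
  · exact contDiff_evalP hN S.P

lemma abs_evalS_le {k : ℕ} (hk : 1 ≤ k) {S : SD d} (hAC : AC S) (hW : WtLE k S.P)
    {x : Euc d} (hx : ‖x‖ ≤ R) :
    |evalS Q ρ S x| ≤ ((∑ i, |S.b i|) + coefSum S.P) * (1 + R ^ k) := by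
  have hR := hN.Rnn
  have h1k : (0:ℝ) ≤ 1 + R ^ k := by positivity
  unfold evalS
  rw [hAC.1, hAC.2, zero_mul, zero_mul, zero_add, add_zero]
  calc |(∑ i, S.b i * x i) + evalP Q ρ x S.P|
      ≤ |∑ i, S.b i * x i| + |evalP Q ρ x S.P| := abs_add_le _ _
  _ ≤ (∑ i, |S.b i|) * (1 + R ^ k) + coefSum S.P * (1 + R ^ k) := by
      apply add_le_add _ (abs_evalP_le hN hW x)
      calc |∑ i, S.b i * x i| ≤ ∑ i, |S.b i * x i| := Finset.abs_sum_le_sum_abs _ _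
      _ ≤ ∑ i, |S.b i| * (1 + R ^ k) := by
          apply Finset.sum_le_sum
          intro i _
          rw [abs_mul]
          apply mul_le_mul_of_nonneg_left _ (abs_nonneg _)
          exact ((abs_coord_le_norm x i).trans hx).trans (le_one_add_pow hR hk)
      _ = (∑ i, |S.b i|) * (1 + R ^ k) := by rw [Finset.sum_mul]
  _ = ((∑ i, |S.b i|) + coefSum S.P) * (1 + R ^ k) := by ring

end evalS

end PotAux

namespace PotAux

def S0 (d : ℕ) : SD d := ⟨1, 0, -1, ([] : Poly d)⟩

def finalS (d : ℕ) (αn : Fin d → ℕ) : SD d := foldS αn (List.finRange d) (S0 d)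

def Cconst (d : ℕ) (αn : Fin d → ℕ) : ℝ :=
  (∑ i, |(finalS d αn).b i|) + coefSum (finalS d αn).P + 1

lemma Cconst_pos (d : ℕ) (αn : Fin d → ℕ) : 0 < Cconst d αn := by
  have h1 : 0 ≤ ∑ i, |(finalS d αn).b i| :=
    Finset.sum_nonneg fun i _ => abs_nonneg _
  have h2 := coefSum_nonneg (finalS d αn).P
  unfold Cconst; linarith

end PotAux


/-- for every `d` and multi-index `α` with `|α| ≥ 1` there is a constant
`C_{d,α}` such that for every compact `Ω ∋ 0`, compactly supported `P, Q` and optimal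
entropic potentials `(f*,g*)`, `f*` is `C^∞` on `Ω` and
`‖D^α f*‖_{∞,Ω} ≤ C_{d,α} (1 + D_Ω^{|α|})`. -/
theorem potential_derivative_bounds (d : ℕ) (α : Fin d → ℕ) (hα : 1 ≤ ∑ j, α j) :
    ∃ C : ℝ, 0 < C ∧
      ∀ (Ω : Set (Euc d)), IsCompact Ω → (0 : Euc d) ∈ Ω →
        ∀ (P Q : Measure (Euc d)) [IsProbabilityMeasure P] [IsProbabilityMeasure Q],
          P Ωᶜ = 0 → Q Ωᶜ = 0 →
          ∀ (f g : Euc d → ℝ), IsPotPair 1 P Q f g →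
            ContDiffOn ℝ (⊤ : ℕ∞) f Ω ∧
            supOn Ω (mderiv α f) ≤ C * (1 + Metric.diam Ω ^ (∑ j, α j)) := by
  classical
  refine ⟨PotAux.Cconst d α, PotAux.Cconst_pos d α, ?_⟩
  intro Ω hΩ h0 P Q hPp hQp hP hQ f g hpot
  obtain ⟨hfInt, hgInt, h3, _h4⟩ := hpot
  set D := Metric.diam Ω with hDdef
  have hDnn : 0 ≤ D := Metric.diam_nonneg
  -- measurable version of g
  set g₀ := hgInt.1.mk g with hg₀def
  have hg₀m : StronglyMeasurable g₀ := hgInt.1.stronglyMeasurable_mk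
  have hgg₀ : g =ᵐ[Q] g₀ := hgInt.1.ae_eq_mk
  set ρ : Euc d → ℝ := fun y => Real.exp (g₀ y - 1/2 * ‖y‖^2) with hρdef
  have hρmeas : Measurable ρ := by
    apply Real.measurable_exp.comp
    exact hg₀m.measurable.sub
      ((continuous_const.mul ((continuous_norm).pow 2)).measurable)
  -- the key integral identity
  have key : ∀ x, ∫ y, Real.exp (g y - 1/2 * ‖x - y‖^2) ∂Q = Real.exp (-(f x)) := by
    intro x
    have h := h3 x
    have h'' : ∫ y, Real.exp (f x) * Real.exp (g y - 1/2 * ‖x - y‖^2) ∂Q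
        = ∫ y, Real.exp ((f x + g y - 1/2 * ‖x - y‖^2) / 1) ∂Q := by
      apply integral_congr_ae
      filter_upwards with y
      rw [← Real.exp_add, div_one]
      congr 1
      ring
    have h' : Real.exp (f x) * ∫ y, Real.exp (g y - 1/2 * ‖x - y‖^2) ∂Q = 1 := by
      rw [← integral_const_mul, h'', h]
    rw [eq_inv_of_mul_eq_one_right h', ← Real.exp_neg]
  -- integrability of the full integrand at x = 0
  have hF0 : Integrable (fun y => Real.exp ((f 0 + g y - 1/2 * ‖(0:Euc d) - y‖^2) / 1)) Q := by
    by_contra hni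
    have := integral_undef hni
    rw [h3 0] at this
    exact one_ne_zero this
  have hρint : Integrable ρ Q := by
    have h1 : Integrable (fun y => (Real.exp (f 0))⁻¹ *
        Real.exp ((f 0 + g y - 1/2 * ‖(0:Euc d) - y‖^2) / 1)) Q := hF0.const_mul _
    have h2 : (fun y => (Real.exp (f 0))⁻¹ *
        Real.exp ((f 0 + g y - 1/2 * ‖(0:Euc d) - y‖^2) / 1))
        = fun y => Real.exp (g y - 1/2 * ‖y‖^2) := by
      funext y
      rw [div_one, ← Real.exp_neg, ← Real.exp_add, zero_sub, norm_neg]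
      congr 1
      ring
    rw [h2] at h1
    apply h1.congr
    filter_upwards [hgg₀] with y hy
    rw [hρdef, hy]
  -- a.e. support bound
  have hsupp : ∀ᵐ y ∂Q, ‖y‖ ≤ D := by
    have hQΩ : ∀ᵐ y ∂Q, y ∈ Ω := by
      rw [ae_iff]
      have : {y : Euc d | ¬ y ∈ Ω} = Ωᶜ := rfl
      rw [this]
      exact hQ
    filter_upwards [hQΩ] with y hy
    have h := Metric.dist_le_diam_of_mem hΩ.isBounded hy h0
    rwa [dist_zero_right] at h
  -- the partition function identity
  have key0 : ∀ x, PotAux.Wfn Q ρ 0 x = Real.exp (1/2 * ‖x‖^2 - f x) := by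
    intro x
    have h1 : PotAux.Wfn Q ρ 0 x
        = ∫ y, Real.exp (1/2 * ‖x‖^2) * Real.exp (g₀ y - 1/2 * ‖x - y‖^2) ∂Q := by
      unfold PotAux.Wfn
      apply integral_congr_ae
      filter_upwards with y
      rw [PotAux.pmon_zero, one_mul, hρdef]
      rw [← Real.exp_add, ← Real.exp_add]
      congr 1
      have hns : ‖x - y‖^2 = ‖x‖^2 - 2 * ⟪x, y⟫ + ‖y‖^2 := norm_sub_sq_real x y
      have hic : ⟪y, x⟫ = ⟪x, y⟫ := real_inner_comm x y
      rw [hic]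
      linarith
    rw [h1, integral_const_mul]
    have h2 : ∫ y, Real.exp (g₀ y - 1/2 * ‖x - y‖^2) ∂Q = Real.exp (-(f x)) := by
      rw [← key x]
      apply integral_congr_ae
      filter_upwards [hgg₀] with y hy
      rw [hy]
    rw [h2, ← Real.exp_add, sub_eq_add_neg]
  have hNice : PotAux.Nice Q ρ D :=
    ⟨inferInstance, hρmeas, fun y => (Real.exp_pos _).le, hρint, hsupp, hDnn,
      fun x => by rw [key0]; exact Real.exp_pos _⟩
  -- representation of f
  have f_eq : f = PotAux.evalS Q ρ (PotAux.S0 d) := by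
    funext x
    unfold PotAux.evalS PotAux.S0
    rw [key0 x, Real.log_exp]
    simp only [PotAux.evalP_nil]
    simp only [Pi.zero_apply, zero_mul, Finset.sum_const_zero]
    ring
  constructor
  · rw [f_eq]
    exact (PotAux.contDiff_evalS hNice _).contDiffOn
  · have hmd : mderiv α f = PotAux.evalS Q ρ (PotAux.finalS d α) := by
      rw [f_eq]
      unfold mderiv PotAux.finalS
      exact PotAux.foldr_evalS hNice α (List.finRange d) (PotAux.S0 d)
    have hsum_eq : ((List.finRange d).map α).sum = ∑ j, α j := (Fin.sum_univ_def α).symm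
    have hACf : PotAux.AC (PotAux.finalS d α) :=
      PotAux.AC_foldS α _ (Or.inr (by rw [hsum_eq]; exact hα))
    have hWf : PotAux.WtLE (∑ j, α j) (PotAux.finalS d α).P := by
      have h := PotAux.WtLE_foldS (k := 0) (S := PotAux.S0 d)
        (fun t ht => by simp [PotAux.S0] at ht) α (List.finRange d)
      rw [Nat.zero_add, hsum_eq] at h
      exact h
    have hCb : ((∑ i, |(PotAux.finalS d α).b i|) + PotAux.coefSum (PotAux.finalS d α).P)
        ≤ PotAux.Cconst d α := by
      unfold PotAux.Cconst; linarith
    have hbound : ∀ x ∈ Ω, |PotAux.evalS Q ρ (PotAux.finalS d α) x|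
        ≤ PotAux.Cconst d α * (1 + D ^ (∑ j, α j)) := by
      intro x hx
      have hxn : ‖x‖ ≤ D := by
        have h := Metric.dist_le_diam_of_mem hΩ.isBounded hx h0
        rwa [dist_zero_right] at h
      refine (PotAux.abs_evalS_le hNice hα hACf hWf hxn).trans ?_
      apply mul_le_mul_of_nonneg_right hCb
      positivity
    unfold supOn
    apply Real.sSup_le
    · rintro r ⟨x, hx, rfl⟩
      rw [hmd]
      exact hbound x hx
    · have := PotAux.Cconst_pos d α
      have h1 : (0:ℝ) < 1 + D ^ (∑ j, α j) := by positivity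
      positivity
end
end

section
/- Let Ω ⊂ ℝ^d be compact with diameter D_Ω and let P, Q be probability measures supported in Ω. If (f, g) is a pair of optimal entropic potentials for (P,Q) normalized so that ∫ g dQ = 0, then sup_{x∈Ω} |f(x)| ≤ ½ D_Ω² and sup_{y∈Ω} |g(y)| ≤ ½ D_Ω². -/
open MeasureTheory ProbabilityTheory Filter
open scoped ENNReal NNReal Topology

noncomputable section

/-- if `(f,g)` are optimal entropic potentials for compactly supported
`(P,Q)` normalized by `∫ g dQ = 0`, then `sup_Ω |f| ≤ ½ D_Ω²` and `sup_Ω |g| ≤ ½ D_Ω²`. -/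
theorem potential_uniform_bound {d : ℕ} (Ω : Set (Euc d)) (hΩ : IsCompact Ω)
    (P Q : Measure (Euc d)) [IsProbabilityMeasure P] [IsProbabilityMeasure Q]
    (hP : P Ωᶜ = 0) (hQ : Q Ωᶜ = 0)
    (f g : Euc d → ℝ) (hpot : IsPotPair 1 P Q f g)
    (hnorm : ∫ y, g y ∂Q = 0) :
    (∀ x ∈ Ω, |f x| ≤ (1/2) * Metric.diam Ω ^ 2) ∧
    (∀ y ∈ Ω, |g y| ≤ (1/2) * Metric.diam Ω ^ 2) := by
  obtain ⟨hf_int, hg_int, hfx, hgy⟩ := hpot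
  simp only [div_one] at hfx hgy
  set D2 : ℝ := (1/2) * Metric.diam Ω ^ 2 with hD2def
  have hD2 : 0 ≤ D2 := by positivity
  have hQae : ∀ᵐ y ∂Q, y ∈ Ω := by
    rw [ae_iff]
    exact hQ
  have hPae : ∀ᵐ x ∂P, x ∈ Ω := by
    rw [ae_iff]
    exact hP
  have hΩne : Ω.Nonempty := by
    by_contra h
    rw [Set.not_nonempty_iff_eq_empty] at h
    rw [h, Set.compl_empty] at hQ
    simp at hQ
  obtain ⟨x₀, hx₀⟩ := hΩne
  have hcost : ∀ x ∈ Ω, ∀ y ∈ Ω, (1/2) * ‖x - y‖^2 ≤ D2 := by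
    intro x hx y hy
    have h1 : ‖x - y‖ ≤ Metric.diam Ω := by
      rw [← dist_eq_norm]
      exact Metric.dist_le_diam_of_mem hΩ.isBounded hx hy
    have h2 : ‖x - y‖^2 ≤ Metric.diam Ω ^ 2 :=
      pow_le_pow_left₀ (norm_nonneg _) h1 2
    rw [hD2def]
    linarith
  -- integrability of the exponential kernels
  have hHint : ∀ x, Integrable (fun y => Real.exp (f x + g y - (1/2) * ‖x - y‖^2)) Q := by
    intro x
    by_contra h
    have h1 := hfx x
    rw [integral_undef h] at h1
    exact one_ne_zero h1.symm
  have hH'int : ∀ y, Integrable (fun x => Real.exp (f x + g y - (1/2) * ‖x - y‖^2)) P := by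
    intro y
    by_contra h
    have h1 := hgy y
    rw [integral_undef h] at h1
    exact one_ne_zero h1.symm
  have hegint : Integrable (fun y => Real.exp (g y)) Q := by
    apply Integrable.mono' ((hHint x₀).const_mul (Real.exp (D2 - f x₀)))
    · exact Real.continuous_exp.comp_aestronglyMeasurable hg_int.aestronglyMeasurable
    · filter_upwards [hQae] with y hy
      rw [Real.norm_eq_abs, abs_of_nonneg (Real.exp_pos _).le, ← Real.exp_add]
      apply Real.exp_le_exp.mpr
      have := hcost x₀ hx₀ y hy
      linarith
  have hefint : Integrable (fun x => Real.exp (f x)) P := by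
    apply Integrable.mono' ((hH'int x₀).const_mul (Real.exp (D2 - g x₀)))
    · exact Real.continuous_exp.comp_aestronglyMeasurable hf_int.aestronglyMeasurable
    · filter_upwards [hPae] with x hx
      rw [Real.norm_eq_abs, abs_of_nonneg (Real.exp_pos _).le, ← Real.exp_add]
      apply Real.exp_le_exp.mpr
      have := hcost x hx x₀ hx₀
      linarith
  set I : ℝ := ∫ x, Real.exp (f x) ∂P with hIdef
  set J : ℝ := ∫ y, Real.exp (g y) ∂Q with hJdef
  -- J ≥ 1 by Jensen (via exp t ≥ 1 + t)
  have hJ1 : 1 ≤ J := by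
    have h1 : ∫ y, (1 + g y) ∂Q ≤ J := by
      apply integral_mono ((integrable_const (1:ℝ)).add hg_int) hegint
      intro y
      have := Real.add_one_le_exp (g y)
      simp only [Pi.add_apply]
      linarith
    rwa [integral_add (integrable_const 1) hg_int, integral_const, hnorm,
      probReal_univ, smul_eq_mul, one_mul, add_zero] at h1
  -- pointwise bounds on g in terms of I
  have hg_lb : ∀ y ∈ Ω, 1 ≤ Real.exp (g y) * I := by
    intro y hy
    have h2 : ∫ x, Real.exp (f x + g y - (1/2) * ‖x - y‖^2) ∂P
        ≤ ∫ x, Real.exp (g y) * Real.exp (f x) ∂P := by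
      apply integral_mono (hH'int y) (hefint.const_mul _)
      intro x
      dsimp only
      rw [← Real.exp_add]
      apply Real.exp_le_exp.mpr
      have : (0:ℝ) ≤ (1/2) * ‖x - y‖^2 := by positivity
      linarith
    rw [hgy y, integral_const_mul] at h2
    exact h2
  have hg_ub : ∀ y ∈ Ω, Real.exp (g y - D2) * I ≤ 1 := by
    intro y hy
    have h2 : ∫ x, Real.exp (g y - D2) * Real.exp (f x) ∂P
        ≤ ∫ x, Real.exp (f x + g y - (1/2) * ‖x - y‖^2) ∂P := by
      apply integral_mono_ae (hefint.const_mul _) (hH'int y)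
      filter_upwards [hPae] with x hx
      rw [← Real.exp_add]
      apply Real.exp_le_exp.mpr
      have := hcost x hx y hy
      linarith
    rw [hgy y, integral_const_mul] at h2
    exact h2
  have hIpos : 0 < I := by
    have h1 := hg_lb x₀ hx₀
    nlinarith [Real.exp_pos (g x₀)]
  -- integrate the g bounds: 0 ≤ log I ≤ D2
  have hlogI_lb : 0 ≤ Real.log I := by
    have h1 : ∫ y, (- Real.log I) ∂Q ≤ ∫ y, g y ∂Q := by
      apply integral_mono_ae (integrable_const _) hg_int
      filter_upwards [hQae] with y hy
      have h2 := hg_lb y hy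
      have h3 : I⁻¹ ≤ Real.exp (g y) := by
        rw [inv_le_iff_one_le_mul₀ hIpos]
        linarith
      have h4 := Real.log_le_log (by positivity) h3
      rwa [Real.log_inv, Real.log_exp] at h4
    rw [hnorm, integral_const, probReal_univ, one_smul] at h1
    linarith
  have hlogI_ub : Real.log I ≤ D2 := by
    have h1 : ∫ y, g y ∂Q ≤ ∫ y, (D2 - Real.log I) ∂Q := by
      apply integral_mono_ae hg_int (integrable_const _)
      filter_upwards [hQae] with y hy
      have h2 := hg_ub y hy
      have h3 : Real.exp (g y - D2) ≤ I⁻¹ := by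
        rw [inv_eq_one_div, le_div_iff₀ hIpos]
        linarith
      have h4 := Real.log_le_log (Real.exp_pos _) h3
      rw [Real.log_exp, Real.log_inv] at h4
      linarith
    rw [hnorm, integral_const, probReal_univ, one_smul] at h1
    linarith
  have hI1 : 1 ≤ I := by
    have := Real.exp_log hIpos
    calc (1:ℝ) = Real.exp 0 := Real.exp_zero.symm
    _ ≤ Real.exp (Real.log I) := Real.exp_le_exp.mpr hlogI_lb
    _ = I := this
  -- J ≤ exp D2
  have hJub : J ≤ Real.exp D2 := by
    have h1 : J ≤ ∫ _ : Euc d, Real.exp D2 ∂Q := by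
      apply integral_mono_ae hegint (integrable_const _)
      filter_upwards [hQae] with y hy
      have h2 := hg_ub y hy
      have h3 : Real.exp (g y - D2) ≤ 1 := by nlinarith
      rw [Real.exp_le_one_iff] at h3
      exact Real.exp_le_exp.mpr (by linarith)
    rwa [integral_const, probReal_univ, one_smul] at h1
  -- bounds on f
  have hf_bound : ∀ x ∈ Ω, |f x| ≤ D2 := by
    intro x hx
    have hub : Real.exp (f x - D2) * J ≤ 1 := by
      have h2 : ∫ y, Real.exp (f x - D2) * Real.exp (g y) ∂Q
          ≤ ∫ y, Real.exp (f x + g y - (1/2) * ‖x - y‖^2) ∂Q := by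
        apply integral_mono_ae (hegint.const_mul _) (hHint x)
        filter_upwards [hQae] with y hy
        rw [← Real.exp_add]
        apply Real.exp_le_exp.mpr
        have := hcost x hx y hy
        linarith
      rw [hfx x, integral_const_mul] at h2
      exact h2
    have hlb : 1 ≤ Real.exp (f x) * J := by
      have h2 : ∫ y, Real.exp (f x + g y - (1/2) * ‖x - y‖^2) ∂Q
          ≤ ∫ y, Real.exp (f x) * Real.exp (g y) ∂Q := by
        apply integral_mono (hHint x) (hegint.const_mul _)
        intro y
        dsimp only
        rw [← Real.exp_add]
        apply Real.exp_le_exp.mpr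
        have : (0:ℝ) ≤ (1/2) * ‖x - y‖^2 := by positivity
        linarith
      rw [hfx x, integral_const_mul] at h2
      exact h2
    rw [abs_le]
    constructor
    · -- f x ≥ -D2 : exp (f x) ≥ 1/J ≥ exp (-D2)
      have h3 : Real.exp (-D2) ≤ Real.exp (f x) := by
        have hJpos : 0 < J := lt_of_lt_of_le one_pos hJ1
        have h4 : J⁻¹ ≤ Real.exp (f x) := by
          rw [inv_le_iff_one_le_mul₀ hJpos]
          linarith
        have h5 : Real.exp (-D2) ≤ J⁻¹ := by
          rw [Real.exp_neg]
          exact inv_anti₀ hJpos hJub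
        linarith
      exact Real.exp_le_exp.mp h3
    · -- f x ≤ D2 : exp (f x - D2) ≤ 1 since J ≥ 1
      have h3 : Real.exp (f x - D2) ≤ 1 := by nlinarith [Real.exp_pos (f x - D2)]
      rw [Real.exp_le_one_iff] at h3
      linarith
  have hg_bound : ∀ y ∈ Ω, |g y| ≤ D2 := by
    intro y hy
    rw [abs_le]
    constructor
    · have h2 := hg_lb y hy
      have h3 : I⁻¹ ≤ Real.exp (g y) := by
        rw [inv_le_iff_one_le_mul₀ hIpos]
        linarith
      have h5 : Real.exp (-D2) ≤ I⁻¹ := by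
        rw [Real.exp_neg]
        apply inv_anti₀ hIpos
        calc I = Real.exp (Real.log I) := (Real.exp_log hIpos).symm
        _ ≤ Real.exp D2 := Real.exp_le_exp.mpr hlogI_ub
      exact Real.exp_le_exp.mp (by linarith)
    · have h2 := hg_ub y hy
      have h3 : Real.exp (g y - D2) ≤ 1 := by nlinarith [Real.exp_pos (g y - D2)]
      rw [Real.exp_le_one_iff] at h3
      linarith
  exact ⟨hf_bound, hg_bound⟩
end
end

section
/- Let Ω ⊂ ℝ^d be compact, let P, Q, P' be probability measures supported in Ω, let (f*, g*) be optimal entropic potentials for (P,Q) and (f', g') be optimal entropic potentials for (P',Q). Set h*(x,y) = f*(x)+g*(y), h'(x,y) = f'(x)+g'(y), and let π* be the probability measure dπ*(x,y) = exp(h*(x,y) − ½‖x−y‖²) dP(x) dQ(y). Then L(h') − L(h*) ≤ −½ · ‖h' − h*‖²_{L²(π*)} · exp(−‖h' − h*‖_{∞,Ω×Ω}), where ‖h‖²_{L²(π*)} = ∫ h² dπ*. -/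
open MeasureTheory ProbabilityTheory Filter
open scoped ENNReal NNReal Topology

noncomputable section

private lemma exp_lower_aux (t : ℝ) : (1/2) * t^2 * Real.exp (-|t|) ≤ Real.exp t - 1 - t := by
  rcases le_or_gt 0 t with ht | ht
  · rw [abs_of_nonneg ht]
    have h1 : 1 + t + t^2/2 ≤ Real.exp t := Real.quadratic_le_exp_of_nonneg ht
    have h2 : Real.exp (-t) ≤ 1 := Real.exp_le_one_iff.mpr (neg_nonpos.mpr ht)
    nlinarith [sq_nonneg t, (Real.exp_pos (-t)).le]
  · rw [abs_of_neg ht, neg_neg]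
    have hE' : Real.exp t * Real.exp (-t) = 1 := by rw [← Real.exp_add]; simp
    have hEpos : (0:ℝ) < Real.exp (-t) := Real.exp_pos _
    have key : (1/2) * t^2 ≤ 1 - (1+t) * Real.exp (-t) := by
      rcases le_or_gt (-1) t with h1 | h1
      · have hb := Real.exp_bound' (by linarith : (0:ℝ) ≤ -t) (by linarith : -t ≤ 1)
          (by norm_num : 0 < 3)
        simp only [Finset.sum_range_succ, Finset.sum_range_zero, Nat.factorial] at hb
        norm_num at hb
        nlinarith [hb, hEpos.le]
      · have hb : 1 + (-t) + (-t)^2/2 ≤ Real.exp (-t) :=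
          Real.quadratic_le_exp_of_nonneg (by linarith)
        nlinarith [hb]
    have key2 := mul_le_mul_of_nonneg_right key (Real.exp_pos t).le
    have expand : (1 - (1+t) * Real.exp (-t)) * Real.exp t = Real.exp t - (1+t) := by
      linear_combination (-1 - t) * hE'
    nlinarith [key2, expand]

private lemma integrable_of_null_compl {α : Type*} [MeasurableSpace α] [TopologicalSpace α]
    [OpensMeasurableSpace α] {K : Set α} (hK : IsCompact K) (μ : Measure α) [IsFiniteMeasure μ]
    (hμ : μ Kᶜ = 0) {f : α → ℝ} (hf : Continuous f) : Integrable f μ := by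
  obtain ⟨C, hC⟩ := hK.exists_bound_of_continuousOn hf.continuousOn
  refine (integrable_const C).mono' hf.aestronglyMeasurable ?_
  have hae : ∀ᵐ a ∂μ, a ∈ K := by
    rw [ae_iff]
    convert hμ using 2
    rfl
  filter_upwards [hae] with a ha using by simpa using hC a ha

private lemma pot_cont {d : ℕ} {Ω : Set (Euc d)} (hΩ : IsCompact Ω)
    (μ : Measure (Euc d)) [IsProbabilityMeasure μ] (hμ : μ Ωᶜ = 0)
    {f g : Euc d → ℝ} (hg : AEStronglyMeasurable g μ)
    (H : ∀ x, ∫ y, Real.exp (f x + g y - (1/2) * ‖x - y‖^2) ∂μ = 1) :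
    Continuous f := by
  set G : Euc d → ℝ := fun x => ∫ y, Real.exp (g y - (1/2) * ‖x - y‖^2) ∂μ with hGdef
  have hfG : ∀ x, Real.exp (f x) * G x = 1 := by
    intro x
    have heq : Real.exp (f x) * G x
        = ∫ y, Real.exp (f x + g y - (1/2) * ‖x - y‖^2) ∂μ := by
      rw [hGdef]
      rw [← integral_const_mul]
      congr 1
      funext y
      rw [← Real.exp_add]
      congr 1
      ring
    rw [heq, H x]
  have hGpos : ∀ x, 0 < G x := by
    intro x
    nlinarith [hfG x, Real.exp_pos (f x)]
  have hfx : ∀ x, f x = -Real.log (G x) := by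
    intro x
    have h1 : Real.log (Real.exp (f x) * G x) = 0 := by rw [hfG x, Real.log_one]
    rw [Real.log_mul (Real.exp_ne_zero _) (hGpos x).ne', Real.log_exp] at h1
    linarith
  have hint : ∀ x, Integrable (fun y => Real.exp (g y - (1/2) * ‖x - y‖^2)) μ := by
    intro x
    by_contra hcon
    have h0 : G x = 0 := integral_undef hcon
    exact (hGpos x).ne' h0
  have hae : ∀ᵐ y ∂μ, y ∈ Ω := by
    rw [ae_iff]
    convert hμ using 2
    rfl
  have hgint : Integrable (fun y => Real.exp (g y)) μ := by
    obtain ⟨R, hR⟩ : ∃ R : ℝ, ∀ y ∈ Ω, ‖y‖ ≤ R := by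
      obtain ⟨R, hR⟩ := hΩ.isBounded.subset_closedBall 0
      exact ⟨R, fun y hy => by simpa using hR hy⟩
    have hmeas : AEStronglyMeasurable (fun y => Real.exp (g y)) μ :=
      Real.continuous_exp.comp_aestronglyMeasurable hg
    refine Integrable.mono' ((hint 0).const_mul (Real.exp ((1/2) * R^2))) hmeas ?_
    filter_upwards [hae] with y hy
    rw [Real.norm_eq_abs, abs_of_pos (Real.exp_pos _), ← Real.exp_add]
    apply Real.exp_le_exp.mpr
    have h1 : ‖(0:Euc d) - y‖ = ‖y‖ := by rw [zero_sub, norm_neg]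
    rw [h1]
    nlinarith [hR y hy, norm_nonneg y]
  have hGcont : Continuous G := by
    rw [continuous_iff_continuousAt]
    intro x0
    apply continuousAt_of_dominated (bound := fun y => Real.exp (g y))
    · refine Eventually.of_forall fun x => ?_
      exact Real.continuous_exp.comp_aestronglyMeasurable
        (hg.sub (Continuous.aestronglyMeasurable (by fun_prop)))
    · refine Eventually.of_forall fun x => Eventually.of_forall fun y => ?_
      rw [Real.norm_eq_abs, abs_of_pos (Real.exp_pos _)]
      apply Real.exp_le_exp.mpr
      nlinarith [sq_nonneg ‖x - y‖]
    · exact hgint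
    · exact Eventually.of_forall fun y => Continuous.continuousAt (by fun_prop)
  have hfeq : f = fun x => -Real.log (G x) := funext hfx
  rw [hfeq]
  refine continuous_iff_continuousAt.mpr fun x => ?_
  exact ((Real.continuousAt_log (hGpos x).ne').comp hGcont.continuousAt).neg

/-- strong concavity of the dual functional near its maximum:
`L(h') − L(h*) ≤ −½ ‖h' − h*‖²_{L²(π*)} e^{−‖h' − h*‖_{∞,Ω×Ω}}`. -/
theorem dual_strong_concavity {d : ℕ} (Ω : Set (Euc d)) (hΩ : IsCompact Ω)
    (P Q P' : Measure (Euc d))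
    [IsProbabilityMeasure P] [IsProbabilityMeasure Q] [IsProbabilityMeasure P']
    (hP : P Ωᶜ = 0) (hQ : Q Ωᶜ = 0) (hP' : P' Ωᶜ = 0)
    (fs gs f' g' : Euc d → ℝ)
    (hpot : IsPotPair 1 P Q fs gs) (hpot' : IsPotPair 1 P' Q f' g') :
    dualL P Q f' g' - dualL P Q fs gs ≤
      -(1/2) * (∫ p : Euc d × Euc d,
            (f' p.1 + g' p.2 - (fs p.1 + gs p.2))^2
          ∂((P.prod Q).withDensity fun p =>
              ENNReal.ofReal (Real.exp (fs p.1 + gs p.2 - (1/2) * ‖p.1 - p.2‖^2)))) *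
        Real.exp (-(supOn (Ω ×ˢ Ω)
          fun p : Euc d × Euc d => f' p.1 + g' p.2 - (fs p.1 + gs p.2))) := by
  classical
  obtain ⟨hfsi, hgsi, hs1, hs2⟩ := hpot
  obtain ⟨hf'i, hg'i, hp1, hp2⟩ := hpot'
  simp only [div_one] at hs1 hs2 hp1 hp2
  have hfs_cont : Continuous fs := pot_cont hΩ Q hQ hgsi.aestronglyMeasurable hs1
  have hf'_cont : Continuous f' := pot_cont hΩ Q hQ hg'i.aestronglyMeasurable hp1
  have hswap : ∀ y, ∫ x, Real.exp (gs y + fs x - (1/2) * ‖y - x‖^2) ∂P = 1 := by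
    intro y
    conv_rhs => rw [← hs2 y]
    congr 1
    funext x
    rw [norm_sub_rev y x]
    congr 1
    ring
  have hgs_cont : Continuous gs := pot_cont hΩ P hP hfsi.aestronglyMeasurable hswap
  have hswap' : ∀ y, ∫ x, Real.exp (g' y + f' x - (1/2) * ‖y - x‖^2) ∂P' = 1 := by
    intro y
    conv_rhs => rw [← hp2 y]
    congr 1
    funext x
    rw [norm_sub_rev y x]
    congr 1
    ring
  have hg'_cont : Continuous g' := pot_cont hΩ P' hP' hf'i.aestronglyMeasurable hswap'
  set u : Euc d × Euc d → ℝ :=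
    fun p : Euc d × Euc d => f' p.1 + g' p.2 - (fs p.1 + gs p.2) with hu_def
  set r : Euc d × Euc d → ℝ :=
    fun p : Euc d × Euc d => Real.exp (fs p.1 + gs p.2 - (1/2) * ‖p.1 - p.2‖^2) with hr_def
  have hu_cont : Continuous u := by
    rw [hu_def]
    exact ((hf'_cont.comp continuous_fst).add (hg'_cont.comp continuous_snd)).sub
      ((hfs_cont.comp continuous_fst).add (hgs_cont.comp continuous_snd))
  have hr_cont : Continuous r := by
    rw [hr_def]
    exact Real.continuous_exp.comp
      (((hfs_cont.comp continuous_fst).add (hgs_cont.comp continuous_snd)).sub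
        (continuous_const.mul (((continuous_fst.sub continuous_snd).norm).pow 2)))
  have hrpos : ∀ p, 0 < r p := fun p => Real.exp_pos _
  have hK : IsCompact (Ω ×ˢ Ω) := hΩ.prod hΩ
  have hμ2K : (P.prod Q) (Ω ×ˢ Ω)ᶜ = 0 := by
    have hsub : (Ω ×ˢ Ω)ᶜ ⊆ (Ωᶜ ×ˢ (Set.univ : Set (Euc d))) ∪
        ((Set.univ : Set (Euc d)) ×ˢ Ωᶜ) := by
      intro p hp
      simp only [Set.mem_compl_iff, Set.mem_prod, not_and_or] at hp
      rcases hp with h | h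
      · exact Or.inl ⟨h, trivial⟩
      · exact Or.inr ⟨trivial, h⟩
    refine measure_mono_null hsub (measure_union_null ?_ ?_)
    · rw [Measure.prod_prod, hP, zero_mul]
    · rw [Measure.prod_prod, hQ, mul_zero]
  have haeK : ∀ᵐ p ∂(P.prod Q), p ∈ Ω ×ˢ Ω := by
    rw [ae_iff]
    convert hμ2K using 2
    rfl
  have hI2 : ∀ {φ : Euc d × Euc d → ℝ}, Continuous φ → Integrable φ (P.prod Q) :=
    fun hφ => integrable_of_null_compl hK (P.prod Q) hμ2K hφ
  have hIP : ∀ {φ : Euc d → ℝ}, Continuous φ → Integrable φ P :=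
    fun hφ => integrable_of_null_compl hΩ P hP hφ
  have hIQ : ∀ {φ : Euc d → ℝ}, Continuous φ → Integrable φ Q :=
    fun hφ => integrable_of_null_compl hΩ Q hQ hφ
  have hA : ∀ x, ∫ y, r (x, y) ∂Q = 1 := hs1
  have hB : ∀ y, ∫ x, r (x, y) ∂P = 1 := hs2
  have hmargP : ∀ φ : Euc d → ℝ, Continuous φ →
      ∫ p, r p * φ p.1 ∂(P.prod Q) = ∫ x, φ x ∂P := by
    intro φ hφ
    rw [integral_prod (fun p : Euc d × Euc d => r p * φ p.1) (hI2 (hr_cont.mul (hφ.comp continuous_fst)))]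
    have h2 : (∫ x, ∫ y, r (x, y) * φ x ∂Q ∂P) = ∫ x, φ x ∂P := by
      congr 1
      funext x
      rw [integral_mul_const, hA x, one_mul]
    exact h2
  have hmargQ : ∀ φ : Euc d → ℝ, Continuous φ →
      ∫ p, r p * φ p.2 ∂(P.prod Q) = ∫ y, φ y ∂Q := by
    intro φ hφ
    rw [integral_prod_symm (fun p : Euc d × Euc d => r p * φ p.2) (hI2 (hr_cont.mul (hφ.comp continuous_snd)))]
    have h2 : (∫ y, ∫ x, r (x, y) * φ y ∂P ∂Q) = ∫ y, φ y ∂Q := by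
      congr 1
      funext y
      rw [integral_mul_const, hB y, one_mul]
    exact h2
  have hrint : ∫ p, r p ∂(P.prod Q) = 1 := by
    have h := hmargP (fun _ => (1:ℝ)) continuous_const
    simpa using h
  have hwd : ∀ φ : Euc d × Euc d → ℝ,
      (∫ p, φ p ∂((P.prod Q).withDensity fun p => ENNReal.ofReal (r p)))
        = ∫ p, r p * φ p ∂(P.prod Q) := by
    intro φ
    have h := integral_withDensity_eq_integral_smul (μ := P.prod Q)
      (f := fun q => Real.toNNReal (r q))
      ((continuous_real_toNNReal.comp hr_cont).measurable) φ
    calc (∫ p, φ p ∂((P.prod Q).withDensity fun p => ENNReal.ofReal (r p)))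
        = ∫ p, Real.toNNReal (r p) • φ p ∂(P.prod Q) := h
      _ = ∫ p, r p * φ p ∂(P.prod Q) := by
          congr 1
          funext p
          rw [NNReal.smul_def, Real.coe_toNNReal _ (hrpos p).le, smul_eq_mul]
  have hSb : ∀ p ∈ Ω ×ˢ Ω, |u p| ≤ supOn (Ω ×ˢ Ω) u := by
    intro p hp
    exact le_csSup ((hK.image hu_cont.abs).bddAbove) (Set.mem_image_of_mem _ hp)
  have hptwise : ∀ᵐ p ∂(P.prod Q),
      r p * (u p - Real.exp (u p) + 1)
        ≤ r p * (-(1/2) * (u p)^2 * Real.exp (-(supOn (Ω ×ˢ Ω) u))) := by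
    filter_upwards [haeK] with p hp
    have h1 := exp_lower_aux (u p)
    have h2 : Real.exp (-(supOn (Ω ×ˢ Ω) u)) ≤ Real.exp (-|u p|) :=
      Real.exp_le_exp.mpr (by linarith [hSb p hp])
    have h3 : u p - Real.exp (u p) + 1
        ≤ -(1/2) * (u p)^2 * Real.exp (-(supOn (Ω ×ˢ Ω) u)) := by
      have h4 := mul_le_mul_of_nonneg_left h2
        (by positivity : (0:ℝ) ≤ (1/2) * (u p)^2)
      nlinarith [h1, h4]
    exact mul_le_mul_of_nonneg_left h3 (hrpos p).le
  have hmono : (∫ p, r p * (u p - Real.exp (u p) + 1) ∂(P.prod Q))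
      ≤ ∫ p, r p * (-(1/2) * (u p)^2 * Real.exp (-(supOn (Ω ×ˢ Ω) u))) ∂(P.prod Q) :=
    integral_mono_ae
      (hI2 (hr_cont.mul ((hu_cont.sub (Real.continuous_exp.comp hu_cont)).add
        continuous_const)))
      (hI2 (hr_cont.mul ((continuous_const.mul (hu_cont.pow 2)).mul continuous_const)))
      hptwise
  have e1 : Integrable (fun p => r p * u p) (P.prod Q) := hI2 (hr_cont.mul hu_cont)
  have e2 : Integrable (fun p => r p * Real.exp (u p)) (P.prod Q) :=
    hI2 (hr_cont.mul (Real.continuous_exp.comp hu_cont))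
  have e3 : Integrable (fun p => r p) (P.prod Q) := hI2 hr_cont
  have hsplit : (∫ p, r p * (u p - Real.exp (u p) + 1) ∂(P.prod Q))
      = (∫ p, r p * u p ∂(P.prod Q)) - (∫ p, r p * Real.exp (u p) ∂(P.prod Q)) + 1 := by
    have hfe : (fun p => r p * (u p - Real.exp (u p) + 1))
        = fun p => (r p * u p - r p * Real.exp (u p)) + r p := by
      funext p
      ring
    have e12 : Integrable (fun p => r p * u p - r p * Real.exp (u p)) (P.prod Q) :=
      e1.sub e2
    rw [hfe, integral_add e12 e3, integral_sub e1 e2, hrint]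
  have hφ1 : Continuous (fun x => f' x - fs x) := hf'_cont.sub hfs_cont
  have hφ2 : Continuous (fun y => g' y - gs y) := hg'_cont.sub hgs_cont
  have m1 : (∫ p, r p * ((fun x => f' x - fs x) p.1) ∂(P.prod Q))
      = (∫ x, f' x ∂P) - ∫ x, fs x ∂P :=
    (hmargP _ hφ1).trans (integral_sub (hIP hf'_cont) (hIP hfs_cont))
  have m2 : (∫ p, r p * ((fun y => g' y - gs y) p.2) ∂(P.prod Q))
      = (∫ y, g' y ∂Q) - ∫ y, gs y ∂Q :=
    (hmargQ _ hφ2).trans (integral_sub (hIQ hg'_cont) (hIQ hgs_cont))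
  have hru : (∫ p, r p * u p ∂(P.prod Q))
      = (((∫ x, f' x ∂P) - ∫ x, fs x ∂P) + ((∫ y, g' y ∂Q) - ∫ y, gs y ∂Q)) := by
    have hfe : (fun p => r p * u p)
        = fun p => r p * ((fun x => f' x - fs x) p.1) + r p * ((fun y => g' y - gs y) p.2) := by
      funext p
      simp only [hu_def]
      ring
    have i1 : Integrable (fun p : Euc d × Euc d => r p * ((fun x => f' x - fs x) p.1))
        (P.prod Q) := hI2 (hr_cont.mul (hφ1.comp continuous_fst))
    have i2 : Integrable (fun p : Euc d × Euc d => r p * ((fun y => g' y - gs y) p.2))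
        (P.prod Q) := hI2 (hr_cont.mul (hφ2.comp continuous_snd))
    rw [hfe, integral_add i1 i2, m1, m2]
  have hIs : (∫ p : Euc d × Euc d,
      Real.exp (fs p.1 + gs p.2 - (1/2) * ‖p.1 - p.2‖^2) ∂(P.prod Q)) = 1 := hrint
  have hI'u : (∫ p : Euc d × Euc d,
      Real.exp (f' p.1 + g' p.2 - (1/2) * ‖p.1 - p.2‖^2) ∂(P.prod Q))
      = ∫ p, r p * Real.exp (u p) ∂(P.prod Q) := by
    congr 1
    funext p
    show Real.exp (f' p.1 + g' p.2 - (1/2) * ‖p.1 - p.2‖^2)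
        = Real.exp (fs p.1 + gs p.2 - (1/2) * ‖p.1 - p.2‖^2) *
          Real.exp (f' p.1 + g' p.2 - (fs p.1 + gs p.2))
    rw [← Real.exp_add]
    congr 1
    ring
  have hdual : dualL P Q f' g' - dualL P Q fs gs
      = (((∫ x, f' x ∂P) - ∫ x, fs x ∂P) + ((∫ y, g' y ∂Q) - ∫ y, gs y ∂Q))
        - (∫ p, r p * Real.exp (u p) ∂(P.prod Q)) + 1 := by
    simp only [dualL]
    rw [hIs, hI'u]
    ring
  have hRu2 : (∫ p : Euc d × Euc d,
        (f' p.1 + g' p.2 - (fs p.1 + gs p.2))^2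
      ∂((P.prod Q).withDensity fun p =>
          ENNReal.ofReal (Real.exp (fs p.1 + gs p.2 - (1/2) * ‖p.1 - p.2‖^2))))
      = ∫ p, r p * (u p)^2 ∂(P.prod Q) := hwd fun p => (u p)^2
  calc dualL P Q f' g' - dualL P Q fs gs
      = ∫ p, r p * (u p - Real.exp (u p) + 1) ∂(P.prod Q) := by
        rw [hdual, hsplit, hru]
    _ ≤ ∫ p, r p * (-(1/2) * (u p)^2 * Real.exp (-(supOn (Ω ×ˢ Ω) u))) ∂(P.prod Q) := hmono
    _ = -(1/2) * (∫ p, r p * (u p)^2 ∂(P.prod Q)) * Real.exp (-(supOn (Ω ×ˢ Ω) u)) := by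
        rw [show (fun p => r p * (-(1/2) * (u p)^2 * Real.exp (-(supOn (Ω ×ˢ Ω) u))))
            = fun p => (-(1/2) * Real.exp (-(supOn (Ω ×ˢ Ω) u))) * (r p * (u p)^2) from by
          funext p
          ring]
        rw [integral_const_mul]
        ring
    _ = -(1/2) * (∫ p : Euc d × Euc d,
            (f' p.1 + g' p.2 - (fs p.1 + gs p.2))^2
          ∂((P.prod Q).withDensity fun p =>
              ENNReal.ofReal (Real.exp (fs p.1 + gs p.2 - (1/2) * ‖p.1 - p.2‖^2)))) *
        Real.exp (-(supOn (Ω ×ˢ Ω) u)) := by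
        rw [hRu2]
end
end
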